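/- arXiv:1912.05251 — 7 statements merged into one kernel-verified Lean document; each statement's English description precedes it below -/
import Mathlib

section
/- Let m ≥ 1, let F be a finite family of bottomless rectangles in general position, and let p be a point covered by at least (m−1)⁴ + 1 rectangles of F. Then there exist m rectangles of F, all covering p, that form increasing m-steps, decreasing m-steps, an m-tower, or an m-nested set. -/
/-- A bottomless rectangle with parameters `(l, r, t)`, `l ≤ r`. -/
structure BRect where
  l : ℝ
  r : ℝ
  t : ℝ
  hlr : l ≤ r

/-- A point `(x, y)` is covered by `(l, r, t)` iff `l ≤ x ≤ r` and `y ≤ t`. -/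
def BRect.covers (R : BRect) (p : ℝ × ℝ) : Prop :=
  R.l ≤ p.1 ∧ p.1 ≤ R.r ∧ p.2 ≤ R.t

/-- A finite family is in general position: pairwise distinct left, right and top
coordinates. -/
def GenPos (F : Finset BRect) : Prop :=
  ∀ R ∈ F, ∀ R' ∈ F, R ≠ R' → R.l ≠ R'.l ∧ R.r ≠ R'.r ∧ R.t ≠ R'.t

/-- Increasing `m`-steps: `l`, `r`, `t` all strictly increasing. -/
def IncSteps {m : ℕ} (R : Fin m → BRect) : Prop :=
  StrictMono (fun i => (R i).l) ∧ StrictMono (fun i => (R i).r) ∧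
    StrictMono (fun i => (R i).t)

/-- Decreasing `m`-steps: `l`, `r` strictly increasing, `t` strictly decreasing. -/
def DecSteps {m : ℕ} (R : Fin m → BRect) : Prop :=
  StrictMono (fun i => (R i).l) ∧ StrictMono (fun i => (R i).r) ∧
    StrictAnti (fun i => (R i).t)

/-- An `m`-tower: `l` strictly increasing, `r` strictly decreasing, `t` strictly
increasing. -/
def TowerCfg {m : ℕ} (R : Fin m → BRect) : Prop :=
  StrictMono (fun i => (R i).l) ∧ StrictAnti (fun i => (R i).r) ∧
    StrictMono (fun i => (R i).t)

/-- An `m`-nested set: `l` strictly increasing, `r` strictly decreasing, `t` strictly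
decreasing. -/
def NestedCfg {m : ℕ} (R : Fin m → BRect) : Prop :=
  StrictMono (fun i => (R i).l) ∧ StrictAnti (fun i => (R i).r) ∧
    StrictAnti (fun i => (R i).t)

noncomputable def chainLen {α : Type*} [LinearOrder α] (f : ℕ → α) (i : ℕ) : ℕ :=
  1 + ((Finset.range i).attach.filter (fun j => f j.1 < f i)).sup
      (fun j => chainLen f j.1)
termination_by i
decreasing_by exact Finset.mem_range.mp j.2

lemma one_le_chainLen {α : Type*} [LinearOrder α] (f : ℕ → α) (i : ℕ) :
    1 ≤ chainLen f i := by
  rw [chainLen]; omega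

lemma chainLen_mono {α : Type*} [LinearOrder α] (f : ℕ → α) {i j : ℕ}
    (hij : j < i) (hf : f j < f i) : chainLen f j < chainLen f i := by
  conv_rhs => rw [chainLen]
  have : chainLen f j ≤ ((Finset.range i).attach.filter (fun j => f j.1 < f i)).sup
      (fun j => chainLen f j.1) := by
    refine Finset.le_sup
      (f := fun (j : {x // x ∈ Finset.range i}) => chainLen f j.1)
      (b := ⟨j, Finset.mem_range.mpr hij⟩) ?_
    simp only [Finset.mem_filter, Finset.mem_attach, true_and]
    exact hf
  omega

lemma chainLen_extract {α : Type*} [LinearOrder α] (f : ℕ → α) (k : ℕ) :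
    ∀ i : ℕ, k + 1 ≤ chainLen f i →
    ∃ g : Fin (k + 1) → ℕ, StrictMono g ∧ StrictMono (f ∘ g) ∧ g (Fin.last k) = i := by
  induction k with
  | zero =>
    intro i _
    haveI : Subsingleton (Fin (0 + 1)) := Fin.subsingleton_one
    exact ⟨fun _ => i, Subsingleton.strictMono _, Subsingleton.strictMono _, rfl⟩
  | succ k ih =>
    intro i h
    rw [chainLen] at h
    have hsup : k + 1 ≤ ((Finset.range i).attach.filter (fun j => f j.1 < f i)).sup
        (fun j => chainLen f j.1) := by omega
    obtain ⟨j, hjmem, hjk⟩ := (Finset.le_sup_iff (Nat.succ_pos k)).mp hsup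
    simp only [Finset.mem_filter, Finset.mem_attach, true_and] at hjmem
    obtain ⟨g, hg1, hg2, hg3⟩ := ih j.1 hjk
    have hji : j.1 < i := Finset.mem_range.mp j.2
    have hgle : ∀ a, g a ≤ j.1 := by
      intro a
      rw [← hg3]
      exact hg1.monotone (Fin.le_last a)
    refine ⟨Fin.snoc g i, ?_, ?_, by simp⟩
    · rw [Fin.strictMono_iff_lt_succ]
      intro a
      refine Fin.lastCases ?_ ?_ a
      · simp only [Fin.snoc_castSucc, Fin.succ_last, Fin.snoc_last]
        rw [hg3]; exact hji
      · intro a'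
        rw [Fin.succ_castSucc]
        simp only [Fin.snoc_castSucc]
        exact hg1 (Fin.castSucc_lt_succ (i := a'))
    · rw [Fin.strictMono_iff_lt_succ]
      intro a
      refine Fin.lastCases ?_ ?_ a
      · simp only [Function.comp, Fin.snoc_castSucc, Fin.succ_last, Fin.snoc_last]
        rw [hg3]; exact hjmem
      · intro a'
        rw [Fin.succ_castSucc]
        simp only [Function.comp, Fin.snoc_castSucc]
        exact hg2 (Fin.castSucc_lt_succ (i := a'))

lemma es_fin {α : Type*} [LinearOrder α] {n r s : ℕ} (f : Fin n → α)
    (hf : Function.Injective f) (hn : r * s + 1 ≤ n) :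
    (∃ g : Fin (r + 1) → Fin n, StrictMono g ∧ StrictMono (f ∘ g)) ∨
    (∃ g : Fin (s + 1) → Fin n, StrictMono g ∧ StrictAnti (f ∘ g)) := by
  have hn0 : 0 < n := by omega
  set f' : ℕ → α := fun i => if h : i < n then f ⟨i, h⟩ else f ⟨0, hn0⟩ with hf'
  set f'' : ℕ → αᵒᵈ := fun i => OrderDual.toDual (f' i) with hf''
  by_cases hA : ∃ i : ℕ, i < n ∧ r + 1 ≤ chainLen f' i
  · obtain ⟨i, hin, hi⟩ := hA
    obtain ⟨g, hg1, hg2, hg3⟩ := chainLen_extract f' r i hi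
    have hglt : ∀ a, g a < n := fun a =>
      lt_of_le_of_lt (hg3 ▸ hg1.monotone (Fin.le_last a)) hin
    refine Or.inl ⟨fun a => ⟨g a, hglt a⟩, ?_, ?_⟩
    · intro a b hab
      exact hg1 hab
    · intro a b hab
      have := hg2 hab
      simpa [Function.comp, hf', hglt a, hglt b] using this
  · by_cases hB : ∃ i : ℕ, i < n ∧ s + 1 ≤ chainLen f'' i
    · obtain ⟨i, hin, hi⟩ := hB
      obtain ⟨g, hg1, hg2, hg3⟩ := chainLen_extract f'' s i hi
      have hglt : ∀ a, g a < n := fun a =>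
        lt_of_le_of_lt (hg3 ▸ hg1.monotone (Fin.le_last a)) hin
      refine Or.inr ⟨fun a => ⟨g a, hglt a⟩, ?_, ?_⟩
      · intro a b hab
        exact hg1 hab
      · intro a b hab
        have := hg2 hab
        simp only [Function.comp, hf'', OrderDual.toDual_lt_toDual] at this
        simpa [Function.comp, hf', hglt a, hglt b] using this
    · exfalso
      push_neg at hA hB
      have hr0 : 0 < r := by
        rcases Nat.eq_zero_or_pos r with h0 | h; swap; · exact h
        have := hA 0 hn0
        have := one_le_chainLen f' 0
        omega
      have hs0 : 0 < s := by
        rcases Nat.eq_zero_or_pos s with h0 | h; swap; · exact h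
        have := hB 0 hn0
        have := one_le_chainLen f'' 0
        omega
      set φ : Fin n → Fin r × Fin s := fun i =>
        (⟨chainLen f' i.1 - 1, by have := hA i.1 i.2; have := one_le_chainLen f' i.1; omega⟩,
         ⟨chainLen f'' i.1 - 1, by have := hB i.1 i.2; have := one_le_chainLen f'' i.1; omega⟩)
        with hφ
      have hφinj : Function.Injective φ := by
        intro i j hij
        by_contra hne
        have hfij : f' i.1 ≠ f' j.1 := by
          simp only [hf', i.2, j.2, dif_pos]
          intro h
          exact hne (by ext; exact congrArg Fin.val (hf h) )
        have h1 : chainLen f' i.1 = chainLen f' j.1 := by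
          have := congrArg (fun x => (x.1 : ℕ)) hij
          simp only [hφ] at this
          have := one_le_chainLen f' i.1
          have := one_le_chainLen f' j.1
          omega
        have h2 : chainLen f'' i.1 = chainLen f'' j.1 := by
          have := congrArg (fun x => (x.2 : ℕ)) hij
          simp only [hφ] at this
          have := one_le_chainLen f'' i.1
          have := one_le_chainLen f'' j.1
          omega
        have hvne : (i : ℕ) ≠ (j : ℕ) := fun h => hne (Fin.ext h)
        rcases Nat.lt_or_ge (i : ℕ) (j : ℕ) with hlt | hge
        · rcases lt_or_gt_of_ne hfij with hc | hc
          · exact absurd h1 (ne_of_lt (chainLen_mono f' hlt hc))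
          · exact absurd h2 (ne_of_lt (chainLen_mono f'' hlt (by
              simpa [hf''] using hc)))
        · have hlt : (j : ℕ) < (i : ℕ) := by omega
          rcases lt_or_gt_of_ne hfij.symm with hc | hc
          · exact absurd h1.symm (ne_of_lt (chainLen_mono f' hlt hc))
          · exact absurd h2.symm (ne_of_lt (chainLen_mono f'' hlt (by
              simpa [hf''] using hc)))
      have := Fintype.card_le_of_injective φ hφinj
      simp only [Fintype.card_fin, Fintype.card_prod] at this
      omega


/-- Any point covered by `(m-1)⁴ + 1` bottomless rectangles in general position is
covered by `m` of them forming increasing steps, decreasing steps, a tower, or a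
nested set. -/
theorem erdos_szekeres_configs (m : ℕ) (hm : 1 ≤ m) (F : Finset BRect) (hF : GenPos F)
    (p : ℝ × ℝ)
    (hp : ∃ G ⊆ F, (m - 1) ^ 4 + 1 ≤ G.card ∧ ∀ R ∈ G, R.covers p) :
    ∃ R : Fin m → BRect,
      (∀ i, R i ∈ F) ∧ (∀ i, (R i).covers p) ∧
      (IncSteps R ∨ DecSteps R ∨ TowerCfg R ∨ NestedCfg R) := by
  obtain ⟨G, hGF, hGcard, hGcov⟩ := hp
  set k := m - 1 with hk
  have hmk : m = k + 1 := by omega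
  -- enumerate G in increasing order of l
  have hlinj : Set.InjOn BRect.l (G : Set BRect) := by
    intro R hR R' hR' h
    by_contra hne
    exact (hF R (hGF hR) R' (hGF hR') hne).1 h
  have hScard : (G.image BRect.l).card = G.card := Finset.card_image_of_injOn hlinj
  set n := G.card with hn
  have hScard' : (G.image BRect.l).card = n := hScard
  set e := (G.image BRect.l).orderEmbOfFin hScard' with he
  have hex : ∀ i : Fin n, ∃ R ∈ G, R.l = e i := by
    intro i
    have : (e i) ∈ G.image BRect.l := (G.image BRect.l).orderEmbOfFin_mem hScard' i
    simpa [Finset.mem_image] using this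
  choose F0 hF0mem hF0l using hex
  have hF0lmono : StrictMono (fun i => (F0 i).l) := by
    intro a b hab
    show (F0 a).l < (F0 b).l
    rw [hF0l a, hF0l b]
    exact e.strictMono hab
  have hF0inj : Function.Injective F0 := by
    intro a b hab
    by_contra hne
    rcases lt_or_gt_of_ne hne with h | h
    · exact absurd (congrArg BRect.l hab) (ne_of_lt (hF0lmono h))
    · exact absurd (congrArg BRect.l hab) (ne_of_gt (hF0lmono h))
  have hcast : StrictMono (Fin.cast hmk : Fin m → Fin (k + 1)) :=
    fun a b hab => by rw [Fin.lt_def] at hab ⊢; exact hab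
  -- first Erdős–Szekeres on r
  have hn1 : k ^ 2 * k ^ 2 + 1 ≤ n := by
    have : k ^ 2 * k ^ 2 = k ^ 4 := by ring
    omega
  have hrinj : Function.Injective (BRect.r ∘ F0) := by
    intro a b hab
    by_contra hne
    have hne' : F0 a ≠ F0 b := fun h => hne (hF0inj h)
    exact (hF (F0 a) (hGF (hF0mem a)) (F0 b) (hGF (hF0mem b)) hne').2.1 hab
  -- second Erdős–Szekeres on t, as a reusable step
  have step2 : ∀ (F1 : Fin (k ^ 2 + 1) → BRect), (∀ i, F1 i ∈ G) →
      Function.Injective F1 →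
      ∃ g2 : Fin (k + 1) → Fin (k ^ 2 + 1), StrictMono g2 ∧
        (StrictMono (fun a => (F1 (g2 a)).t) ∨ StrictAnti (fun a => (F1 (g2 a)).t)) := by
    intro F1 hmem hinj
    have htinj : Function.Injective (BRect.t ∘ F1) := by
      intro a b hab
      by_contra hne
      have hne' : F1 a ≠ F1 b := fun h => hne (hinj h)
      exact (hF (F1 a) (hGF (hmem a)) (F1 b) (hGF (hmem b)) hne').2.2 hab
    have hn2 : k * k + 1 ≤ k ^ 2 + 1 := by rw [pow_two]
    rcases es_fin (BRect.t ∘ F1) htinj hn2 with ⟨g2, h1, h2⟩ | ⟨g2, h1, h2⟩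
    · exact ⟨g2, h1, Or.inl h2⟩
    · exact ⟨g2, h1, Or.inr h2⟩
  rcases es_fin (BRect.r ∘ F0) hrinj hn1 with ⟨g1, hg1m, hg1r⟩ | ⟨g1, hg1m, hg1r⟩
  · obtain ⟨g2, hg2m, ht⟩ := step2 (F0 ∘ g1) (fun i => hF0mem _)
      (hF0inj.comp hg1m.injective)
    refine ⟨F0 ∘ g1 ∘ g2 ∘ Fin.cast hmk, fun i => hGF (hF0mem _),
      fun i => hGcov _ (hF0mem _), ?_⟩
    have hl : StrictMono (fun i => ((F0 ∘ g1 ∘ g2 ∘ Fin.cast hmk) i).l) :=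
      fun a b hab => hF0lmono (hg1m (hg2m (hcast hab)))
    have hr : StrictMono (fun i => ((F0 ∘ g1 ∘ g2 ∘ Fin.cast hmk) i).r) :=
      fun a b hab => hg1r (hg2m (hcast hab))
    rcases ht with h | h
    · exact Or.inl ⟨hl, hr, fun a b hab => h (hcast hab)⟩
    · exact Or.inr (Or.inl ⟨hl, hr, fun a b hab => h (hcast hab)⟩)
  · obtain ⟨g2, hg2m, ht⟩ := step2 (F0 ∘ g1) (fun i => hF0mem _)
      (hF0inj.comp hg1m.injective)
    refine ⟨F0 ∘ g1 ∘ g2 ∘ Fin.cast hmk, fun i => hGF (hF0mem _),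
      fun i => hGcov _ (hF0mem _), ?_⟩
    have hl : StrictMono (fun i => ((F0 ∘ g1 ∘ g2 ∘ Fin.cast hmk) i).l) :=
      fun a b hab => hF0lmono (hg1m (hg2m (hcast hab)))
    have hr : StrictAnti (fun i => ((F0 ∘ g1 ∘ g2 ∘ Fin.cast hmk) i).r) :=
      fun a b hab => hg1r (hg2m (hcast hab))
    rcases ht with h | h
    · exact Or.inr (Or.inr (Or.inl ⟨hl, hr, fun a b hab => h (hcast hab)⟩))
    · exact Or.inr (Or.inr (Or.inr ⟨hl, hr, fun a b hab => h (hcast hab)⟩))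
end

section
/- Let k ≥ 1 and let F be a finite family of bottomless rectangles in general position. Then for each of the four configuration types T ∈ {increasing k-steps, decreasing k-steps, k-tower, k-nested set} there exists a colouring c : F → {1, …, k} such that for every point p ∈ ℝ²: if some k rectangles of F, all covering p, form a configuration of type T, then p is covered by all k colours. -/
/-- The colouring `c` is polychromatic for the configuration type `cfg`: any point
covered by `k` members of `F` forming a `cfg`-configuration is covered by all `k`
colours. -/
def GoodColouring (k : ℕ) (F : Finset BRect) (cfg : (Fin k → BRect) → Prop)
    (c : BRect → Fin k) : Prop :=
  ∀ p : ℝ × ℝ,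
    (∃ R : Fin k → BRect, (∀ i, R i ∈ F) ∧ (∀ i, (R i).covers p) ∧ cfg R) →
    ∀ i : Fin k, ∃ R' ∈ F, R'.covers p ∧ c R' = i

/- ----------------------------------------------------------------------------
   Auxiliary machinery.

   Abstract setting: three real "coordinates" `a b c` on rectangles.  For an
   element `Z` and a threshold `lam` we consider the certificate set
   `polyT F a b c Z lam = {W ∈ F : a W ≤ lam, b Z ≤ b W, c Z ≤ c W}`.
   We build a colouring such that for every chain `W 0, …, W (j-1)` (with `b`
   and `c` strictly increasing and all `a`-values `≤ lam`) the certificate set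
   of its first element carries at least `min j k` distinct colours.
   ---------------------------------------------------------------------------- -/

open Classical in
noncomputable def polyT (F : Finset BRect) (a b c : BRect → ℝ) (Z : BRect) (lam : ℝ) :
    Finset BRect :=
  F.filter (fun W => a W ≤ lam ∧ b Z ≤ b W ∧ c Z ≤ c W)

def polyGood (k : ℕ) (F : Finset BRect) (a b c : BRect → ℝ) (col : BRect → Fin k) : Prop :=
  ∀ (j : ℕ) (W : ℕ → BRect) (lam : ℝ), 0 < j →
    (∀ i, i < j → W i ∈ F) →
    (∀ i, i + 1 < j → b (W i) < b (W (i + 1))) →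
    (∀ i, i + 1 < j → c (W i) < c (W (i + 1))) →
    (∀ i, i < j → a (W i) ≤ lam) →
    min j k ≤ ((polyT F a b c (W 0) lam).image col).card

lemma polyChainMono {f : BRect → ℝ} {W : ℕ → BRect} {j : ℕ}
    (h : ∀ i, i + 1 < j → f (W i) < f (W (i + 1))) :
    ∀ i i', i ≤ i' → i' < j → f (W i) ≤ f (W i') := by
  intro i i'
  induction i' with
  | zero =>
    intro h1 _
    obtain rfl : i = 0 := Nat.le_zero.mp h1
    exact le_rfl
  | succ n ih =>
    intro h1 h2
    by_cases hi : i = n + 1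
    · subst hi; exact le_rfl
    · exact le_trans (ih (by omega) (by omega)) (le_of_lt (h n (by omega)))

lemma polyExists (k : ℕ) (hk : 0 < k) (a b c : BRect → ℝ) :
    ∀ F : Finset BRect, (∀ Z ∈ F, ∀ Z' ∈ F, Z ≠ Z' → c Z ≠ c Z') →
      ∃ col : BRect → Fin k, polyGood k F a b c col := by
  classical
  intro F
  induction F using Finset.strongInduction with
  | _ F IH =>
  intro hc
  rcases F.eq_empty_or_nonempty with rfl | hne
  · refine ⟨fun _ => ⟨0, hk⟩, ?_⟩
    intro j W lam hj hWF _ _ _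
    exact absurd (hWF 0 hj) (by simp)
  obtain ⟨Z₀, hZ₀F, hZ₀min⟩ := F.exists_min_image c hne
  have hss : F.erase Z₀ ⊂ F := Finset.erase_ssubset hZ₀F
  obtain ⟨col', hcol'⟩ := IH (F.erase Z₀) hss
      (fun Z hZ Z' hZ' h =>
        hc Z (Finset.mem_of_mem_erase hZ) Z' (Finset.mem_of_mem_erase hZ') h)
  have hlt : ∀ Z ∈ F.erase Z₀, c Z₀ < c Z := by
    intro Z hZ
    refine lt_of_le_of_ne (hZ₀min Z (Finset.mem_of_mem_erase hZ)) ?_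
    exact hc Z₀ hZ₀F Z (Finset.mem_of_mem_erase hZ) (Ne.symm (Finset.ne_of_mem_erase hZ))
  set Tz : ℝ → Finset BRect :=
    fun lam => (F.erase Z₀).filter (fun W => a W ≤ lam ∧ b Z₀ ≤ b W) with hTzdef
  set Lam : Finset ℝ :=
    (F.image a).filter (fun lam => ((Tz lam).image col').card < k) with hLamdef
  have hpick : ∀ h : Lam.Nonempty, ∃ γ : Fin k, γ ∉ (Tz (Lam.max' h)).image col' := by
    intro h
    have hcard : ((Tz (Lam.max' h)).image col').card < k :=
      (Finset.mem_filter.mp (Lam.max'_mem h)).2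
    by_contra hcon
    push_neg at hcon
    have hsub : (Finset.univ : Finset (Fin k)) ⊆ (Tz (Lam.max' h)).image col' :=
      fun γ _ => hcon γ
    have := Finset.card_le_card hsub
    rw [Finset.card_univ, Fintype.card_fin] at this
    omega
  set γ₀ : Fin k := if h : Lam.Nonempty then Classical.choose (hpick h) else ⟨0, hk⟩ with hγ₀
  set col : BRect → Fin k := Function.update col' Z₀ γ₀ with hcoldef
  have hagree : ∀ V, V ≠ Z₀ → col V = col' V := by
    intro V h
    simp [hcoldef, Function.update_of_ne h]
  have hselfc : col Z₀ = γ₀ := by simp [hcoldef]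
  refine ⟨col, ?_⟩
  intro j W lam hj hWF hb hcadj ha
  by_cases hWZ : W 0 = Z₀
  · -- the chain starts at the minimum
    have hZT : Z₀ ∈ polyT F a b c (W 0) lam := by
      simp only [polyT, Finset.mem_filter]
      refine ⟨hZ₀F, ?_, ?_, ?_⟩
      · have := ha 0 hj; rw [hWZ] at this; exact this
      · rw [hWZ]
      · rw [hWZ]
    rcases Nat.lt_or_ge 1 j with hj2 | hj1
    · -- j ≥ 2
      have hW'F : ∀ i, i < j - 1 → W (i + 1) ∈ F.erase Z₀ := by
        intro i hi
        refine Finset.mem_erase.mpr ⟨?_, hWF (i + 1) (by omega)⟩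
        intro hEq
        have h1 : c (W 1) ≤ c (W (i + 1)) := polyChainMono hcadj 1 (i + 1) (by omega) (by omega)
        have h2 : c (W 0) < c (W 1) := hcadj 0 (by omega)
        rw [hWZ] at h2
        rw [hEq] at h1
        exact absurd (lt_of_lt_of_le h2 h1) (lt_irrefl _)
      have hmain := hcol' (j - 1) (fun n => W (n + 1)) lam (by omega) hW'F
          (fun i hi => hb (i + 1) (by omega))
          (fun i hi => hcadj (i + 1) (by omega))
          (fun i hi => ha (i + 1) (by omega))
      set S : Finset BRect := polyT (F.erase Z₀) a b c (W 1) lam with hSdef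
      set X : Finset (Fin k) := S.image col' with hXdef
      have hXm : min (j - 1) k ≤ X.card := hmain
      have hSTz : S ⊆ Tz lam := by
        intro V hV
        obtain ⟨hVF, hP⟩ := Finset.mem_filter.mp hV
        refine Finset.mem_filter.mpr ⟨hVF, hP.1, ?_⟩
        have h2 : b (W 0) < b (W 1) := hb 0 (by omega)
        rw [hWZ] at h2
        exact le_of_lt (lt_of_lt_of_le h2 hP.2.1)
      have hTzsub : Tz lam ⊆ polyT F a b c (W 0) lam := by
        intro V hV
        obtain ⟨hVF, hP⟩ := Finset.mem_filter.mp hV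
        refine Finset.mem_filter.mpr ⟨Finset.mem_of_mem_erase hVF, hP.1, ?_, ?_⟩
        · rw [hWZ]; exact hP.2
        · rw [hWZ]; exact le_of_lt (hlt V hVF)
      have himgTz : (Tz lam).image col' = (Tz lam).image col := by
        apply Finset.image_congr
        intro V hV
        exact (hagree V (Finset.ne_of_mem_erase (Finset.mem_filter.mp hV).1)).symm
      by_cases hY : k ≤ ((Tz lam).image col').card
      · refine le_trans (Nat.min_le_right j k) (le_trans hY ?_)
        rw [himgTz]
        exact Finset.card_le_card (Finset.image_subset_image hTzsub)
      · push_neg at hY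
        have hW1S : W 1 ∈ S := by
          refine Finset.mem_filter.mpr ⟨hW'F 0 (by omega), ha 1 (by omega), le_rfl, le_rfl⟩
        have hTzne : (Tz lam).Nonempty := ⟨W 1, hSTz hW1S⟩
        have hTzane : ((Tz lam).image a).Nonempty := hTzne.image a
        set lamhat : ℝ := ((Tz lam).image a).max' hTzane with hlamhatdef
        have h_eq : Tz lamhat = Tz lam := by
          apply Finset.ext
          intro V
          constructor
          · intro hV
            obtain ⟨hVF, hP⟩ := Finset.mem_filter.mp hV
            refine Finset.mem_filter.mpr ⟨hVF, le_trans hP.1 ?_, hP.2⟩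
            apply Finset.max'_le
            intro y hy
            obtain ⟨U, hU, rfl⟩ := Finset.mem_image.mp hy
            exact (Finset.mem_filter.mp hU).2.1
          · intro hV
            obtain ⟨hVF, hP⟩ := Finset.mem_filter.mp hV
            exact Finset.mem_filter.mpr
              ⟨hVF, Finset.le_max' _ _ (Finset.mem_image_of_mem a hV), hP.2⟩
        have hlamLam : lamhat ∈ Lam := by
          refine Finset.mem_filter.mpr ⟨?_, ?_⟩
          · obtain ⟨V, hV, hVa⟩ := Finset.mem_image.mp (((Tz lam).image a).max'_mem hTzane)
            rw [hlamhatdef, ← hVa]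
            exact Finset.mem_image_of_mem a
              (Finset.mem_of_mem_erase (Finset.mem_filter.mp hV).1)
          · rw [h_eq]; exact hY
        have hLamne : Lam.Nonempty := ⟨lamhat, hlamLam⟩
        have hγspec : γ₀ ∉ (Tz (Lam.max' hLamne)).image col' := by
          rw [hγ₀, dif_pos hLamne]
          exact Classical.choose_spec (hpick hLamne)
        have hmono : Tz lamhat ⊆ Tz (Lam.max' hLamne) := by
          intro V hV
          obtain ⟨hVF, hP⟩ := Finset.mem_filter.mp hV
          exact Finset.mem_filter.mpr
            ⟨hVF, le_trans hP.1 (Finset.le_max' _ _ hlamLam), hP.2⟩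
        have hγY : γ₀ ∉ (Tz lam).image col' := by
          intro hmem
          rw [← h_eq] at hmem
          exact hγspec (Finset.image_subset_image hmono hmem)
        have hγX : γ₀ ∉ X := fun hmem => hγY (Finset.image_subset_image hSTz hmem)
        have hXsub : insert γ₀ X ⊆ (polyT F a b c (W 0) lam).image col := by
          intro γ hγ
          rcases Finset.mem_insert.mp hγ with rfl | hγ
          · exact hselfc ▸ Finset.mem_image_of_mem col hZT
          · obtain ⟨V, hV, hVc⟩ := Finset.mem_image.mp hγ
            have hVF' : V ∈ F.erase Z₀ := (Finset.mem_filter.mp hV).1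
            refine Finset.mem_image.mpr ⟨V, hTzsub (hSTz hV), ?_⟩
            rw [hagree V (Finset.ne_of_mem_erase hVF')]
            exact hVc
        have hcard1 : X.card + 1 ≤ ((polyT F a b c (W 0) lam).image col).card := by
          have h1 := Finset.card_le_card hXsub
          rw [Finset.card_insert_of_notMem hγX] at h1
          omega
        have hXk : X.card < k :=
          lt_of_le_of_lt (Finset.card_le_card (Finset.image_subset_image hSTz))
            (by rw [hXdef] at *; exact hY)
        rcases Nat.le_total (j - 1) k with h | h
        · rw [Nat.min_eq_left h] at hXm
          rcases Nat.le_total j k with h2 | h2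
          · rw [Nat.min_eq_left h2]; omega
          · rw [Nat.min_eq_right h2]; omega
        · rw [Nat.min_eq_right h] at hXm
          exact le_trans (Nat.min_le_right j k) (by omega)
    · -- j = 1
      have hone : j = 1 := by omega
      subst hone
      have h1 : 0 < ((polyT F a b c (W 0) lam).image col).card :=
        Finset.card_pos.mpr ⟨col Z₀, Finset.mem_image_of_mem col hZT⟩
      exact le_trans (Nat.min_le_left 1 k) h1
  · -- the chain avoids the minimum entirely
    have hW0 : W 0 ∈ F.erase Z₀ := Finset.mem_erase.mpr ⟨hWZ, hWF 0 hj⟩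
    have hWF' : ∀ i, i < j → W i ∈ F.erase Z₀ := by
      intro i hi
      refine Finset.mem_erase.mpr ⟨?_, hWF i hi⟩
      intro hEq
      have h1 : c (W 0) ≤ c (W i) := polyChainMono hcadj 0 i (Nat.zero_le _) hi
      have h2 : c Z₀ < c (W 0) := hlt _ hW0
      rw [hEq] at h1
      exact absurd (lt_of_lt_of_le h2 h1) (lt_irrefl _)
    have hmain := hcol' j W lam hj hWF' hb hcadj ha
    have hTeq : polyT (F.erase Z₀) a b c (W 0) lam = polyT F a b c (W 0) lam := by
      apply Finset.ext
      intro V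
      simp only [polyT, Finset.mem_filter, Finset.mem_erase]
      constructor
      · rintro ⟨⟨_, hVF⟩, hP⟩; exact ⟨hVF, hP⟩
      · rintro ⟨hVF, hP⟩
        refine ⟨⟨?_, hVF⟩, hP⟩
        intro hEq
        have h2 : c Z₀ < c (W 0) := hlt _ hW0
        have h3 : c (W 0) ≤ c V := hP.2.2
        rw [hEq] at h3
        exact absurd (lt_of_lt_of_le h2 h3) (lt_irrefl _)
    have himgeq : (polyT (F.erase Z₀) a b c (W 0) lam).image col'
        = (polyT F a b c (W 0) lam).image col := by
      rw [← hTeq]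
      apply Finset.image_congr
      intro V hV
      have hne' : V ≠ Z₀ :=
        Finset.ne_of_mem_erase (Finset.mem_filter.mp hV).1
      exact (hagree V hne').symm
    rw [← himgeq]
    exact hmain

/-- From `polyGood` with a full-length chain, extract a rectangle of each colour. -/
lemma polyExtract (k : ℕ) (hk : 0 < k) (F : Finset BRect) (a b c : BRect → ℝ)
    (col : BRect → Fin k) (h : polyGood k F a b c col)
    (W : ℕ → BRect) (lam : ℝ)
    (hWF : ∀ i, i < k → W i ∈ F)
    (hb : ∀ i, i + 1 < k → b (W i) < b (W (i + 1)))
    (hcc : ∀ i, i + 1 < k → c (W i) < c (W (i + 1)))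
    (ha : ∀ i, i < k → a (W i) ≤ lam) (i : Fin k) :
    ∃ R' ∈ F, (a R' ≤ lam ∧ b (W 0) ≤ b R' ∧ c (W 0) ≤ c R') ∧ col R' = i := by
  classical
  have hmain := h k W lam hk hWF hb hcc ha
  rw [min_self] at hmain
  have himg : (polyT F a b c (W 0) lam).image col = Finset.univ := by
    apply Finset.eq_of_subset_of_card_le (Finset.subset_univ _)
    rw [Finset.card_univ, Fintype.card_fin]
    exact hmain
  have hi : i ∈ (polyT F a b c (W 0) lam).image col := by
    rw [himg]; exact Finset.mem_univ i
  obtain ⟨R', hR'T, hR'c⟩ := Finset.mem_image.mp hi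
  obtain ⟨hR'F, hP⟩ := Finset.mem_filter.mp hR'T
  exact ⟨R', hR'F, hP, hR'c⟩

/-- For each of the four Erdős–Szekeres configuration types, `m_k^* = k`: there is a
`k`-colouring such that any point covered by a `k`-fold configuration of that type gets
all `k` colours. -/
theorem configs_polychromatic (k : ℕ) (hk : 1 ≤ k) (F : Finset BRect) (hF : GenPos F) :
    (∃ c : BRect → Fin k, GoodColouring k F IncSteps c) ∧
    (∃ c : BRect → Fin k, GoodColouring k F DecSteps c) ∧
    (∃ c : BRect → Fin k, GoodColouring k F TowerCfg c) ∧
    (∃ c : BRect → Fin k, GoodColouring k F NestedCfg c) := by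
  classical
  have hk0 : 0 < k := hk
  have hk1 : k - 1 < k := by omega
  refine ⟨?_, ?_, ?_, ?_⟩
  · -- Increasing steps: a = l, b = r, c = t.
    obtain ⟨col, hcol⟩ := polyExists k hk0 (fun Q => Q.l) (fun Q => Q.r) (fun Q => Q.t) F
      (fun Z hZ Z' hZ' h => (hF Z hZ Z' hZ' h).2.2)
    refine ⟨col, ?_⟩
    rintro p ⟨R, hRF, hRcov, hl, hr, ht⟩ i
    set W : ℕ → BRect := fun n => R ⟨n % k, Nat.mod_lt n hk0⟩ with hWdef
    have hWeq : ∀ m (h : m < k), W m = R ⟨m, h⟩ := by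
      intro m h
      simp only [hWdef]
      congr 1
      exact Fin.ext (Nat.mod_eq_of_lt h)
    obtain ⟨R', hR'F, hP, hR'c⟩ := polyExtract k hk0 F _ _ _ col hcol W ((R ⟨k - 1, hk1⟩).l)
      (fun m hm => by rw [hWeq m hm]; exact hRF _)
      (fun m hm => by
        rw [hWeq m (by omega), hWeq (m + 1) hm]
        exact hr (by simp [Fin.mk_lt_mk]))
      (fun m hm => by
        rw [hWeq m (by omega), hWeq (m + 1) hm]
        exact ht (by simp [Fin.mk_lt_mk]))
      (fun m hm => by
        rw [hWeq m hm]
        exact hl.monotone (by simp only [Fin.mk_le_mk]; omega)) i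
    refine ⟨R', hR'F, ?_, hR'c⟩
    rw [hWeq 0 hk0] at hP
    obtain ⟨h0l, h0r, h0t⟩ := hRcov ⟨0, hk0⟩
    obtain ⟨hkl, hkr, hkt⟩ := hRcov ⟨k - 1, hk1⟩
    exact ⟨le_trans hP.1 hkl, le_trans h0r hP.2.1, le_trans h0t hP.2.2⟩
  · -- Decreasing steps: a = -r, b = -l, c = t, reversed chain.
    obtain ⟨col, hcol⟩ := polyExists k hk0 (fun Q => -Q.r) (fun Q => -Q.l) (fun Q => Q.t) F
      (fun Z hZ Z' hZ' h => (hF Z hZ Z' hZ' h).2.2)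
    refine ⟨col, ?_⟩
    rintro p ⟨R, hRF, hRcov, hl, hr, ht⟩ i
    set W : ℕ → BRect := fun n => R ⟨k - 1 - n % k, by omega⟩ with hWdef
    have hWeq : ∀ m, m < k → W m = R ⟨k - 1 - m, by omega⟩ := by
      intro m h
      simp only [hWdef]
      congr 1
      exact Fin.ext (by simp [Nat.mod_eq_of_lt h])
    obtain ⟨R', hR'F, hP, hR'c⟩ := polyExtract k hk0 F _ _ _ col hcol W (-(R ⟨0, hk0⟩).r)
      (fun m hm => by rw [hWeq m hm]; exact hRF _)
      (fun m hm => by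
        rw [hWeq m (by omega), hWeq (m + 1) hm]
        exact neg_lt_neg (hl (by simp only [Fin.mk_lt_mk]; omega)))
      (fun m hm => by
        rw [hWeq m (by omega), hWeq (m + 1) hm]
        exact ht (by simp only [Fin.mk_lt_mk]; omega))
      (fun m hm => by
        rw [hWeq m hm]
        exact neg_le_neg (hr.monotone (by simp only [Fin.mk_le_mk]; omega))) i
    refine ⟨R', hR'F, ?_, hR'c⟩
    rw [hWeq 0 hk0] at hP
    simp only [Nat.sub_zero] at hP
    obtain ⟨h0l, h0r, h0t⟩ := hRcov ⟨0, hk0⟩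
    obtain ⟨hkl, hkr, hkt⟩ := hRcov ⟨k - 1, hk1⟩
    refine ⟨le_trans (neg_le_neg_iff.mp hP.2.1) hkl, le_trans h0r (neg_le_neg_iff.mp hP.1), le_trans hkt hP.2.2⟩
  · -- Towers: a = -t, b = -l, c = r, reversed chain.
    obtain ⟨col, hcol⟩ := polyExists k hk0 (fun Q => -Q.t) (fun Q => -Q.l) (fun Q => Q.r) F
      (fun Z hZ Z' hZ' h => (hF Z hZ Z' hZ' h).2.1)
    refine ⟨col, ?_⟩
    rintro p ⟨R, hRF, hRcov, hl, hr, ht⟩ i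
    set W : ℕ → BRect := fun n => R ⟨k - 1 - n % k, by omega⟩ with hWdef
    have hWeq : ∀ m, m < k → W m = R ⟨k - 1 - m, by omega⟩ := by
      intro m h
      simp only [hWdef]
      congr 1
      exact Fin.ext (by simp [Nat.mod_eq_of_lt h])
    obtain ⟨R', hR'F, hP, hR'c⟩ := polyExtract k hk0 F _ _ _ col hcol W (-(R ⟨0, hk0⟩).t)
      (fun m hm => by rw [hWeq m hm]; exact hRF _)
      (fun m hm => by
        rw [hWeq m (by omega), hWeq (m + 1) hm]
        exact neg_lt_neg (hl (by simp only [Fin.mk_lt_mk]; omega)))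
      (fun m hm => by
        rw [hWeq m (by omega), hWeq (m + 1) hm]
        exact hr (by simp only [Fin.mk_lt_mk]; omega))
      (fun m hm => by
        rw [hWeq m hm]
        exact neg_le_neg (ht.monotone (by simp only [Fin.mk_le_mk]; omega))) i
    refine ⟨R', hR'F, ?_, hR'c⟩
    rw [hWeq 0 hk0] at hP
    simp only [Nat.sub_zero] at hP
    obtain ⟨h0l, h0r, h0t⟩ := hRcov ⟨0, hk0⟩
    obtain ⟨hkl, hkr, hkt⟩ := hRcov ⟨k - 1, hk1⟩
    exact ⟨le_trans (neg_le_neg_iff.mp hP.2.1) hkl, le_trans hkr hP.2.2, le_trans h0t (neg_le_neg_iff.mp hP.1)⟩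
  · -- Nested: a = -t, b = -l, c = r, reversed chain, anchor t at last element.
    obtain ⟨col, hcol⟩ := polyExists k hk0 (fun Q => -Q.t) (fun Q => -Q.l) (fun Q => Q.r) F
      (fun Z hZ Z' hZ' h => (hF Z hZ Z' hZ' h).2.1)
    refine ⟨col, ?_⟩
    rintro p ⟨R, hRF, hRcov, hl, hr, ht⟩ i
    set W : ℕ → BRect := fun n => R ⟨k - 1 - n % k, by omega⟩ with hWdef
    have hWeq : ∀ m, m < k → W m = R ⟨k - 1 - m, by omega⟩ := by
      intro m h
      simp only [hWdef]
      congr 1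
      exact Fin.ext (by simp [Nat.mod_eq_of_lt h])
    obtain ⟨R', hR'F, hP, hR'c⟩ := polyExtract k hk0 F _ _ _ col hcol W (-(R ⟨k - 1, hk1⟩).t)
      (fun m hm => by rw [hWeq m hm]; exact hRF _)
      (fun m hm => by
        rw [hWeq m (by omega), hWeq (m + 1) hm]
        exact neg_lt_neg (hl (by simp only [Fin.mk_lt_mk]; omega)))
      (fun m hm => by
        rw [hWeq m (by omega), hWeq (m + 1) hm]
        exact hr (by simp only [Fin.mk_lt_mk]; omega))
      (fun m hm => by
        rw [hWeq m hm]
        exact neg_le_neg (ht.antitone (by simp only [Fin.mk_le_mk]; omega))) i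
    refine ⟨R', hR'F, ?_, hR'c⟩
    rw [hWeq 0 hk0] at hP
    simp only [Nat.sub_zero] at hP
    obtain ⟨hkl, hkr, hkt⟩ := hRcov ⟨k - 1, hk1⟩
    exact ⟨le_trans (neg_le_neg_iff.mp hP.2.1) hkl, le_trans hkr hP.2.2, le_trans hkt (neg_le_neg_iff.mp hP.1)⟩
end

section
/- Let k ≥ 1 and let F be a finite family of bottomless rectangles in general position. Then: (a) there exists a colouring c : F → {1, …, k} such that every point p covered by k rectangles of F forming a k-tower, as well as every point p covered by k rectangles of F forming a k-nested set, is covered by all k colours; (b) the same holds with 'k-tower' replaced by 'increasing k-steps'; (c) the same holds with 'k-tower' replaced by 'decreasing k-steps'. -/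
/-! ### Auxiliary abstract machinery

We prove one abstract combinatorial lemma and instantiate it three times, with
different choices of coordinate functions `(f, g, h)`.

For a rectangle `W`, a real `s` and a colouring `c`, consider the helper set
`Kset F f g h W s = {U ∈ F | f U < f W, g U > g W, h U ≥ s}`.  A `Chain` is a
sequence in `F`, strictly increasing in `f`, strictly decreasing in `g`, all of
whose members have `h`-value at least `s`.  We colour the rectangles of `F` by
recursion on `f` (erasing an `f`-maximal element), always choosing for the new
rectangle `W₀` a colour outside the union `A` of all colour sets of helper sets
`Kset F f g h W₀ s` having fewer than `k` colours; since those helper sets form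
a nested (totally ordered) family as `s` varies, `A` has fewer than `k` colours
and such a choice is possible.  An induction on chain length then shows that a
chain of `m ≤ k` rectangles ending at `W` forces at least `m` colours on
`{W} ∪ Kset F f g h W s`, all of whose members cover the relevant point. -/

noncomputable section
open scoped Classical

namespace BottomlessAux

/-- Helper counting set. -/
def Kset (F : Finset BRect) (f g h : BRect → ℝ) (W : BRect) (s : ℝ) : Finset BRect :=
  F.filter (fun U => f U < f W ∧ g W < g U ∧ s ≤ h U)

lemma mem_Kset {F : Finset BRect} {f g h : BRect → ℝ} {W U : BRect} {s : ℝ} :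
    U ∈ Kset F f g h W s ↔ U ∈ F ∧ f U < f W ∧ g W < g U ∧ s ≤ h U := by
  simp [Kset]

lemma Kset_mono {F : Finset BRect} (f g h : BRect → ℝ) (W : BRect) {s s' : ℝ}
    (hss : s ≤ s') : Kset F f g h W s' ⊆ Kset F f g h W s := by
  intro U hU
  rw [mem_Kset] at hU ⊢
  exact ⟨hU.1, hU.2.1, hU.2.2.1, le_trans hss hU.2.2.2⟩

/-- `Chain F f g h s m W` : there is a chain of `m+1` rectangles of `F` ending at `W`,
strictly increasing in `f`, strictly decreasing in `g`, all with `h`-value ≥ `s`. -/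
def Chain (F : Finset BRect) (f g h : BRect → ℝ) (s : ℝ) : ℕ → BRect → Prop
  | 0, W => W ∈ F ∧ s ≤ h W
  | m + 1, W => W ∈ F ∧ s ≤ h W ∧
      ∃ W', Chain F f g h s m W' ∧ f W' < f W ∧ g W < g W'

lemma Chain.mem {F : Finset BRect} {f g h : BRect → ℝ} {s : ℝ} :
    ∀ {m : ℕ} {W : BRect}, Chain F f g h s m W → W ∈ F ∧ s ≤ h W
  | 0, _, hc => hc
  | _ + 1, _, hc => ⟨hc.1, hc.2.1⟩

/-- Chains whose top is not the `f`-maximum survive erasing the `f`-maximum. -/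
lemma Chain.erase {F : Finset BRect} {f g h : BRect → ℝ} {s : ℝ} {W₀ : BRect}
    (hmax : ∀ U ∈ F, f U ≤ f W₀) :
    ∀ {m : ℕ} {W : BRect}, Chain F f g h s m W → W ≠ W₀ →
      Chain (F.erase W₀) f g h s m W
  | 0, W, hc, hne => ⟨Finset.mem_erase.2 ⟨hne, hc.1⟩, hc.2⟩
  | m + 1, W, hc, hne => by
    obtain ⟨hWF, hsW, W', hc', hf, hg⟩ := hc
    have hW'ne : W' ≠ W₀ := by
      intro hEq
      have h1 : f W ≤ f W₀ := hmax W hWF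
      rw [hEq] at hf
      exact absurd (lt_of_lt_of_le hf h1) (lt_irrefl _)
    exact ⟨Finset.mem_erase.2 ⟨hne, hWF⟩, hsW, W', Chain.erase hmax hc' hW'ne, hf, hg⟩

/-- Erasing the `f`-maximum does not change helper sets of other elements. -/
lemma Kset_erase {F : Finset BRect} {f g h : BRect → ℝ} {W₀ W : BRect} {s : ℝ}
    (hWmax : f W ≤ f W₀) : Kset (F.erase W₀) f g h W s = Kset F f g h W s := by
  ext U
  rw [mem_Kset, mem_Kset, Finset.mem_erase]
  constructor
  · rintro ⟨⟨_, hUF⟩, h2⟩; exact ⟨hUF, h2⟩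
  · rintro ⟨hUF, h2⟩
    refine ⟨⟨?_, hUF⟩, h2⟩
    intro hEq
    rw [hEq] at h2
    exact absurd (lt_of_lt_of_le h2.1 hWmax) (lt_irrefl _)

/-- The key property of a colouring: every chain of `m+1 ≤ k` rectangles ending at `W`
forces at least `m+1` colours on `{W} ∪ Kset`. -/
def Star (k : ℕ) (F : Finset BRect) (f g h : BRect → ℝ) (c : BRect → Fin k) : Prop :=
  ∀ (s : ℝ) (m : ℕ) (W : BRect), m + 1 ≤ k → Chain F f g h s m W →
    m + 1 ≤ (insert (c W) ((Kset F f g h W s).image c)).card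

/-- Existence of a colouring with the `Star` property. -/
lemma exists_star (k : ℕ) (hk : 1 ≤ k) (f g h : BRect → ℝ) (F : Finset BRect) :
    ∃ c : BRect → Fin k, Star k F f g h c := by
  induction F using Finset.strongInduction with
  | _ F IH =>
    rcases eq_or_ne F ∅ with hF | hF
    · refine ⟨fun _ => ⟨0, hk⟩, ?_⟩
      intro s m W _ hc
      have := hc.mem.1
      rw [hF] at this
      exact absurd this (Finset.notMem_empty W)
    · obtain ⟨W₀, hW₀F, hmax⟩ :=
        F.exists_max_image f (Finset.nonempty_of_ne_empty hF)
      obtain ⟨c', hc'⟩ := IH (F.erase W₀) (Finset.erase_ssubset hW₀F)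
      set colsSet : ℝ → Finset (Fin k) := fun s => (Kset F f g h W₀ s).image c'
        with hcolsSet
      set A : Finset (Fin k) :=
        Finset.univ.filter (fun i => ∃ s, (colsSet s).card < k ∧ i ∈ colsSet s) with hA
      have hcolsMono : ∀ {s s' : ℝ}, s ≤ s' → colsSet s' ⊆ colsSet s := by
        intro s s' hss
        exact Finset.image_subset_image (Kset_mono f g h W₀ hss)
      have hAsmall : ∃ γ : Fin k, γ ∉ A := by
        by_contra hcon
        push_neg at hcon
        have hw : ∀ i : Fin k, ∃ s, (colsSet s).card < k ∧ i ∈ colsSet s := by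
          intro i
          have := hcon i
          rw [hA, Finset.mem_filter] at this
          exact this.2
        choose sw hwcard hwmem using hw
        obtain ⟨i₀, -, hi₀⟩ := Finset.exists_max_image Finset.univ
            (fun i => (colsSet (sw i)).card) ⟨⟨0, hk⟩, Finset.mem_univ _⟩
        have hsub : ∀ i : Fin k, colsSet (sw i) ⊆ colsSet (sw i₀) := by
          intro i
          rcases le_total (sw i) (sw i₀) with hle | hle
          · have hss : colsSet (sw i₀) ⊆ colsSet (sw i) := hcolsMono hle
            have heq := Finset.eq_of_subset_of_card_le hss (hi₀ i (Finset.mem_univ i))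
            rw [heq]
          · exact hcolsMono hle
        have huniv : (Finset.univ : Finset (Fin k)) ⊆ colsSet (sw i₀) :=
          fun i _ => hsub i (hwmem i)
        have hk2 : k ≤ (colsSet (sw i₀)).card := by
          have h1 : (Finset.univ : Finset (Fin k)).card ≤ (colsSet (sw i₀)).card :=
            Finset.card_le_card huniv
          simpa using h1
        exact absurd hk2 (not_le.2 (hwcard i₀))
      obtain ⟨γ, hγ⟩ := hAsmall
      refine ⟨Function.update c' W₀ γ, ?_⟩
      set c := Function.update c' W₀ γ with hc
      have hagree : ∀ U : BRect, U ≠ W₀ → c U = c' U := by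
        intro U hU; rw [hc]; exact Function.update_of_ne hU γ c'
      have himage : ∀ (W : BRect) (s : ℝ), f W ≤ f W₀ →
          (Kset F f g h W s).image c = (Kset F f g h W s).image c' := by
        intro W s hWle
        apply Finset.image_congr
        intro U hU
        have hU' : U ∈ Kset F f g h W s := hU
        rw [mem_Kset] at hU'
        apply hagree
        intro hEq
        rw [hEq] at hU'
        exact absurd (lt_of_lt_of_le hU'.2.1 hWle) (lt_irrefl _)
      intro s m W hmk hchain
      have hWF : W ∈ F := hchain.mem.1
      by_cases hWeq : W = W₀
      · rcases m with - | m'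
        · have hpos : 0 < (insert (c W) ((Kset F f g h W s).image c)).card :=
            Finset.card_pos.2 ⟨c W, Finset.mem_insert_self _ _⟩
          omega
        · obtain ⟨-, -, W', hc'chain, hfW', hgW'⟩ := hchain
          rw [hWeq] at hfW' hgW'
          have hW'ne : W' ≠ W₀ := by
            intro hEq; rw [hEq] at hfW'; exact absurd hfW' (lt_irrefl _)
          have hW'F : W' ∈ F := hc'chain.mem.1
          have hW'h : s ≤ h W' := hc'chain.mem.2
          have hchainE : Chain (F.erase W₀) f g h s m' W' :=
            Chain.erase hmax hc'chain hW'ne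
          have hstar' := hc' s m' W' (by omega) hchainE
          have hKsub : Kset (F.erase W₀) f g h W' s ⊆ Kset F f g h W₀ s := by
            intro U hU
            rw [mem_Kset] at hU ⊢
            exact ⟨(Finset.erase_subset _ _) hU.1, lt_trans hU.2.1 hfW',
              lt_trans hgW' hU.2.2.1, hU.2.2.2⟩
          have hW'mem : W' ∈ Kset F f g h W₀ s :=
            mem_Kset.2 ⟨hW'F, hfW', hgW', hW'h⟩
          have hsub2 : insert (c' W') ((Kset (F.erase W₀) f g h W' s).image c')
              ⊆ colsSet s := by
            intro i hi
            rcases Finset.mem_insert.1 hi with hi | hi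
            · exact hi ▸ Finset.mem_image_of_mem c' hW'mem
            · obtain ⟨U, hU, hUc⟩ := Finset.mem_image.1 hi
              exact hUc ▸ Finset.mem_image_of_mem c' (hKsub hU)
          have hm'1 : m' + 1 ≤ (colsSet s).card :=
            le_trans hstar' (Finset.card_le_card hsub2)
          have himW₀ : (Kset F f g h W₀ s).image c = colsSet s :=
            himage W₀ s (le_refl _)
          rw [hWeq]
          by_cases hbig : m' + 2 ≤ (colsSet s).card
          · have hsub3 : colsSet s ⊆ insert (c W₀) ((Kset F f g h W₀ s).image c) := by
              rw [himW₀]; exact Finset.subset_insert _ _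
            have := Finset.card_le_card hsub3
            omega
          · have hcard : (colsSet s).card = m' + 1 := by omega
            have hsmall : (colsSet s).card < k := by omega
            have hγnot : γ ∉ colsSet s := by
              intro hmem
              apply hγ
              rw [hA, Finset.mem_filter]
              exact ⟨Finset.mem_univ _, s, hsmall, hmem⟩
            have hcW₀ : c W₀ = γ := by rw [hc]; exact Function.update_self _ _ _
            rw [himW₀, hcW₀, Finset.card_insert_of_notMem hγnot, hcard]
      · have hchainE : Chain (F.erase W₀) f g h s m W :=
          Chain.erase hmax hchain hWeq
        have hstar' := hc' s m W hmk hchainE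
        have hWle : f W ≤ f W₀ := hmax W hWF
        have hKeq : Kset (F.erase W₀) f g h W s = Kset F f g h W s :=
          Kset_erase hWle
        have himW : (Kset F f g h W s).image c = (Kset F f g h W s).image c' :=
          himage W s hWle
        rw [hKeq] at hstar'
        rw [himW, hagree W hWeq]
        exact hstar'

/-- Build a `Chain` from a strictly monotone `Fin k`-indexed configuration. -/
lemma chain_of_seq {k : ℕ} {F : Finset BRect} {f g h : BRect → ℝ} {s : ℝ}
    (V : Fin k → BRect) (hmem : ∀ i, V i ∈ F)
    (hf : StrictMono fun i => f (V i)) (hg : StrictAnti fun i => g (V i))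
    (hs : ∀ i, s ≤ h (V i)) :
    ∀ j : ℕ, (hj : j < k) → Chain F f g h s j (V ⟨j, hj⟩) := by
  intro j
  induction j with
  | zero => exact fun hj => ⟨hmem _, hs _⟩
  | succ n ihn =>
    intro hj
    have hn : n < k := Nat.lt_of_succ_lt hj
    refine ⟨hmem _, hs _, V ⟨n, hn⟩, ihn hn, ?_, ?_⟩
    · exact hf (show (⟨n, hn⟩ : Fin k) < ⟨n + 1, hj⟩ from by
        simp [Fin.mk_lt_mk])
    · exact hg (show (⟨n, hn⟩ : Fin k) < ⟨n + 1, hj⟩ from by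
        simp [Fin.mk_lt_mk])

/-- From `Star` and a covering configuration chain, all colours appear among covering
rectangles.  Abstract version: we supply the last chain element `W` and the fact that
every member of `{W} ∪ Kset F f g h W s` covers `p`. -/
lemma all_colours {k : ℕ} (hk : 1 ≤ k) {F : Finset BRect} {f g h : BRect → ℝ}
    {c : BRect → Fin k} (hstar : Star k F f g h c) {s : ℝ} {W : BRect}
    (hchain : Chain F f g h s (k - 1) W) (p : ℝ × ℝ) (hWcov : W.covers p)
    (hKcov : ∀ U ∈ Kset F f g h W s, U.covers p) :
    ∀ i : Fin k, ∃ R' ∈ F, R'.covers p ∧ c R' = i := by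
  intro i
  have hstar' := hstar s (k - 1) W (by omega) hchain
  have hcards : k ≤ (insert (c W) ((Kset F f g h W s).image c)).card := by
    have : k - 1 + 1 = k := by omega
    omega
  have huniv : insert (c W) ((Kset F f g h W s).image c) = Finset.univ := by
    apply Finset.eq_univ_of_card
    refine le_antisymm ?_ ?_
    · calc (insert (c W) ((Kset F f g h W s).image c)).card
          ≤ (Finset.univ : Finset (Fin k)).card := Finset.card_le_card (Finset.subset_univ _)
        _ = k := by simp
        _ = Fintype.card (Fin k) := by simp
    · simpa using hcards
  have hi : i ∈ insert (c W) ((Kset F f g h W s).image c) := by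
    rw [huniv]; exact Finset.mem_univ i
  rcases Finset.mem_insert.1 hi with hi | hi
  · exact ⟨W, hchain.mem.1, hWcov, hi.symm⟩
  · obtain ⟨U, hU, hUc⟩ := Finset.mem_image.1 hi
    exact ⟨U, (Finset.filter_subset _ _) hU, hKcov U hU, hUc⟩

end BottomlessAux

end

open BottomlessAux in
/-- A single `k`-colouring can handle nested sets together with each of the other three
configuration types. -/
theorem configs_pairs_polychromatic (k : ℕ) (hk : 1 ≤ k) (F : Finset BRect)
    (hF : GenPos F) :
    (∃ c : BRect → Fin k, GoodColouring k F TowerCfg c ∧ GoodColouring k F NestedCfg c) ∧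
    (∃ c : BRect → Fin k, GoodColouring k F IncSteps c ∧ GoodColouring k F NestedCfg c) ∧
    (∃ c : BRect → Fin k, GoodColouring k F DecSteps c ∧ GoodColouring k F NestedCfg c) := by
  have hk1 : k - 1 < k := by omega
  constructor
  · -- pair (a): tower + nested, with (f, g, h) = (l, r, t)
    obtain ⟨c, hstar⟩ := exists_star k hk (fun R => R.l) (fun R => R.r) (fun R => R.t) F
    refine ⟨c, ?_, ?_⟩ <;>
    · rintro p ⟨R, hmem, hcov, hl, hr, ht⟩ i
      have hchain := chain_of_seq (F := F) (f := fun R => R.l) (g := fun R => R.r)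
        (h := fun R => R.t) (s := p.2) R hmem hl hr (fun j => (hcov j).2.2) (k - 1) hk1
      set W := R ⟨k - 1, hk1⟩ with hW
      refine all_colours hk hstar hchain p (hcov _) ?_ i
      intro U hU
      rw [mem_Kset] at hU
      obtain ⟨hWl, hWr, hWt⟩ := hcov (⟨k - 1, hk1⟩ : Fin k)
      exact ⟨le_of_lt (lt_of_lt_of_le hU.2.1 hWl),
        le_of_lt (lt_of_le_of_lt hWr hU.2.2.1), hU.2.2.2⟩
  constructor
  · -- pair (b): increasing steps + nested, with (f, g, h) = (-r, t, -l)
    obtain ⟨c, hstar⟩ := exists_star k hk (fun R => -R.r) (fun R => R.t) (fun R => -R.l) F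
    have key : ∀ (p : ℝ × ℝ) (V : Fin k → BRect), (∀ i, V i ∈ F) → (∀ i, (V i).covers p) →
        StrictMono (fun i => -(V i).r) → StrictAnti (fun i => (V i).t) →
        ∀ i : Fin k, ∃ R' ∈ F, R'.covers p ∧ c R' = i := by
      intro p V hmem hcov hmono hanti i
      have hchain := chain_of_seq (F := F) (f := fun R => -R.r) (g := fun R => R.t)
        (h := fun R => -R.l) (s := -p.1) V hmem hmono hanti
        (fun j => neg_le_neg (hcov j).1) (k - 1) hk1
      refine all_colours hk hstar hchain p (hcov _) ?_ i
      intro U hU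
      rw [mem_Kset] at hU
      obtain ⟨hWl, hWr, hWt⟩ := hcov (⟨k - 1, hk1⟩ : Fin k)
      refine ⟨?_, ?_, ?_⟩
      · linarith [hU.2.2.2]
      · have : (V ⟨k - 1, hk1⟩).r < U.r := by linarith [hU.2.1]
        linarith
      · linarith [hU.2.2.1, hWt]
    refine ⟨c, ?_, ?_⟩
    · rintro p ⟨R, hmem, hcov, hl, hr, ht⟩ i
      -- reverse the chain
      refine key p (fun j => R (Fin.rev j)) (fun j => hmem _) (fun j => hcov _) ?_ ?_ i
      · intro a b hab
        have : Fin.rev b < Fin.rev a := Fin.rev_lt_rev.2 hab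
        simpa using neg_lt_neg (hr this)
      · intro a b hab
        have : Fin.rev b < Fin.rev a := Fin.rev_lt_rev.2 hab
        exact ht this
    · rintro p ⟨R, hmem, hcov, hl, hr, ht⟩ i
      refine key p R hmem hcov ?_ ht i
      intro a b hab
      simpa using neg_lt_neg (hr hab)
  · -- pair (c): decreasing steps + nested, with (f, g, h) = (l, t, r)
    obtain ⟨c, hstar⟩ := exists_star k hk (fun R => R.l) (fun R => R.t) (fun R => R.r) F
    refine ⟨c, ?_, ?_⟩ <;>
    · rintro p ⟨R, hmem, hcov, hl, hr, ht⟩ i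
      have hchain := chain_of_seq (F := F) (f := fun R => R.l) (g := fun R => R.t)
        (h := fun R => R.r) (s := p.1) R hmem hl ht (fun j => (hcov j).2.1) (k - 1) hk1
      refine all_colours hk hstar hchain p (hcov _) ?_ i
      intro U hU
      rw [mem_Kset] at hU
      obtain ⟨hWl, hWr, hWt⟩ := hcov (⟨k - 1, hk1⟩ : Fin k)
      exact ⟨le_of_lt (lt_of_lt_of_le hU.2.1 hWl), hU.2.2.2,
        le_trans hWt (le_of_lt hU.2.2.1)⟩
end

section
/- Let F be a finite family of bottomless rectangles in general position such that no two rectangles of F form a tower or a nested pair. Then there exist a finite family F' of bottomless rectangles, each of width 1 (i.e. r − l = 1), and a bijection φ : F → F' such that for every subset S ⊆ F: there exists a point p ∈ ℝ² with S = {R ∈ F : R covers p} if and only if there exists a point p' ∈ ℝ² with φ(S) = {R' ∈ F' : R' covers p'} (i.e., the dual hypergraphs of F and F' are isomorphic). -/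
/-- Two bottomless rectangles form a tower. -/
def TowerPair (A B : BRect) : Prop :=
  (A.l < B.l ∧ B.r < A.r ∧ A.t < B.t) ∨ (B.l < A.l ∧ A.r < B.r ∧ B.t < A.t)

/-- Two bottomless rectangles form a nested pair. -/
def NestedPair (A B : BRect) : Prop :=
  (A.l < B.l ∧ B.r < A.r ∧ B.t < A.t) ∨ (B.l < A.l ∧ A.r < B.r ∧ A.t < B.t)


noncomputable def mkv (b : ℕ → ℕ) : ℕ → ℝ
  | 0 => 0
  | (n+1) =>
      if min (b (n+1)) (n+1) = n+1 then
        mkv b n + 2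
      else
        (max (mkv b n)
            (if min (b (n+1)) (n+1) = 0 then mkv b n
             else mkv b (min (b (n+1)) (n+1) - 1) + 1)
          + (mkv b (min (b (n+1)) (n+1)) + 1)) / 2
  termination_by n => n
  decreasing_by all_goals omega

lemma mkv_props {b : ℕ → ℕ} (hmono : Monotone b) (hb : ∀ j, b j ≤ j) :
    ∀ j, (∀ k, k < j → mkv b k < mkv b j) ∧ mkv b j < mkv b (b j) + 1 ∧
      (∀ k, k < b j → mkv b k + 1 < mkv b j) := by
  intro j
  induction j using Nat.strong_induction_on with
  | _ j ih =>
    match j with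
    | 0 =>
      have hb0 : b 0 = 0 := Nat.le_zero.mp (hb 0)
      refine ⟨by omega, ?_, by omega⟩
      rw [hb0]; linarith
    | (n+1) =>
      have hle : ∀ a c, a ≤ c → c ≤ n → mkv b a ≤ mkv b c := by
        intro a c hac hcn
        rcases eq_or_lt_of_le hac with h | h
        · rw [h]
        · exact le_of_lt ((ih c (by omega)).1 a h)
      have hmin : min (b (n+1)) (n+1) = b (n+1) := Nat.min_eq_left (hb _)
      by_cases hcase : b (n+1) = n+1
      · have hv : mkv b (n+1) = mkv b n + 2 := by
          rw [mkv, hmin, if_pos hcase]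
        refine ⟨?_, ?_, ?_⟩
        · intro k hk
          have : mkv b k ≤ mkv b n := hle k n (by omega) le_rfl
          linarith
        · rw [hcase]; linarith
        · intro k hk
          rw [hcase] at hk
          have : mkv b k ≤ mkv b n := hle k n (by omega) le_rfl
          linarith
      · have hBn : b (n+1) ≤ n := by have := hb (n+1); omega
        set B := b (n+1) with hBdef
        set lo := max (mkv b n) (if B = 0 then mkv b n else mkv b (B-1) + 1) with hlo
        have hv : mkv b (n+1) = (lo + (mkv b B + 1))/2 := by
          rw [mkv, hmin, if_neg hcase, hlo]
        have hkey : lo < mkv b B + 1 := by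
          have h1 : mkv b n < mkv b B + 1 := by
            have h2 : mkv b n < mkv b (b n) + 1 := (ih n (by omega)).2.1
            have h3 : mkv b (b n) ≤ mkv b B :=
              hle (b n) B (hmono (by omega)) hBn
            linarith
          rcases eq_or_ne B 0 with h0 | h0
          · rw [h0] at h1
            rw [hlo, h0, if_pos rfl, max_self]
            exact h1
          · have h4 : mkv b (B-1) < mkv b B := (ih B (by omega)).1 (B-1) (by omega)
            rw [hlo, if_neg h0]
            exact max_lt h1 (by linarith)
        have hlov : lo < mkv b (n+1) := by rw [hv]; linarith
        have hvB : mkv b (n+1) < mkv b B + 1 := by rw [hv]; linarith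
        refine ⟨?_, hvB, ?_⟩
        · intro k hk
          have h5 : mkv b k ≤ mkv b n := hle k n (by omega) le_rfl
          have h6 : mkv b n ≤ lo := le_max_left _ _
          linarith
        · intro k hk
          have h0 : B ≠ 0 := by omega
          have h5 : mkv b k ≤ mkv b (B-1) := hle k (B-1) (by omega) (by omega)
          have h6 : mkv b (B-1) + 1 ≤ lo := by
            rw [hlo, if_neg h0]; exact le_max_right _ _
          linarith

lemma mkv_strictMono {b : ℕ → ℕ} (hmono : Monotone b) (hb : ∀ j, b j ≤ j) :
    StrictMono (mkv b) := fun i j h => (mkv_props hmono hb j).1 i h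

lemma mkv_key {b : ℕ → ℕ} (hmono : Monotone b) (hb : ∀ j, b j ≤ j) (i j : ℕ) :
    mkv b j ≤ mkv b i + 1 ↔ b j ≤ i := by
  constructor
  · intro h
    by_contra hc
    push_neg at hc
    have := (mkv_props hmono hb j).2.2 i hc
    linarith
  · intro h
    have h1 := (mkv_props hmono hb j).2.1
    have h2 : mkv b (b j) ≤ mkv b i := (mkv_strictMono hmono hb).monotone h
    linarith


lemma stab_transfer (n : ℕ) (u w u' w' : ℕ → ℝ)
    (hu : ∀ i j, i < j → j < n → u i < u j)
    (hw : ∀ i j, i < j → j < n → w i < w j)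
    (hu' : ∀ i j, i < j → j < n → u' i < u' j)
    (hw' : ∀ i j, i < j → j < n → w' i < w' j)
    (bridge : ∀ i j, i < n → j < n → (u j ≤ w i ↔ u' j ≤ w' i))
    (x : ℝ) : ∃ x', ∀ k, k < n → ((u k ≤ x ∧ x ≤ w k) ↔ (u' k ≤ x' ∧ x' ≤ w' k)) := by
  classical
  by_cases hA : ∃ k, k < n ∧ u k ≤ x ∧ x ≤ w k
  · set A : Finset ℕ := (Finset.range n).filter (fun k => u k ≤ x ∧ x ≤ w k) with hAdef
    have hAmem : ∀ k, k ∈ A ↔ (k < n ∧ (u k ≤ x ∧ x ≤ w k)) := by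
      intro k; simp [hAdef]
    obtain ⟨k0, hk0⟩ := hA
    have hAne : A.Nonempty := ⟨k0, (hAmem k0).mpr hk0⟩
    set i := A.min' hAne with hidef
    set j := A.max' hAne with hjdef
    have hiA : i ∈ A := A.min'_mem hAne
    have hjA : j ∈ A := A.max'_mem hAne
    have hin : i < n := ((hAmem i).mp hiA).1
    have hjn : j < n := ((hAmem j).mp hjA).1
    have hux_i : u i ≤ x := ((hAmem i).mp hiA).2.1
    have hux_j : u j ≤ x := ((hAmem j).mp hjA).2.1
    have hxw_i : x ≤ w i := ((hAmem i).mp hiA).2.2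
    have hij : i ≤ j := A.min'_le j hjA
    have hwlt : ∀ k, k < i → w k < x := by
      intro k hk
      have hkn : k < n := by omega
      have hknA : k ∉ A := fun hkA => absurd (A.min'_le k hkA) (by omega)
      have huk : u k ≤ x := le_of_lt (lt_of_lt_of_le (hu k i hk hin) hux_i)
      by_contra hc
      exact hknA ((hAmem k).mpr ⟨hkn, huk, le_of_not_gt hc⟩)
    have hult : ∀ k, j < k → k < n → x < u k := by
      intro k hk hkn
      have hknA : k ∉ A := fun hkA => absurd (A.le_max' k hkA) (by omega)
      have hxk : x ≤ w k := le_trans hxw_i (le_of_lt (hw i k (by omega) hkn))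
      by_contra hc
      exact hknA ((hAmem k).mpr ⟨hkn, le_of_not_gt hc, hxk⟩)
    have hb1 : u' j ≤ w' i := (bridge i j hin hjn).mp (le_trans hux_j hxw_i)
    -- main: any x' satisfying the four constraints works
    have main : ∀ x', u' j ≤ x' → x' ≤ w' i → (0 < i → w' (i-1) < x') →
        (j + 1 < n → x' < u' (j+1)) →
        ∀ k, k < n → ((u k ≤ x ∧ x ≤ w k) ↔ (u' k ≤ x' ∧ x' ≤ w' k)) := by
      intro x' c1 c2 c3 c4 k hkn
      constructor
      · intro hk
        have hkA : k ∈ A := (hAmem k).mpr ⟨hkn, hk⟩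
        have hik : i ≤ k := A.min'_le k hkA
        have hkj : k ≤ j := A.le_max' k hkA
        constructor
        · rcases eq_or_lt_of_le hkj with h | h
          · rw [h]; exact c1
          · exact le_trans (le_of_lt (hu' k j h hjn)) c1
        · rcases eq_or_lt_of_le hik with h | h
          · rw [← h]; exact c2
          · exact le_trans c2 (le_of_lt (hw' i k h hkn))
      · intro hk
        have hik : i ≤ k := by
          by_contra hc
          push_neg at hc
          have h1 : w' k ≤ w' (i-1) := by
            rcases eq_or_lt_of_le (Nat.le_sub_one_of_lt hc) with h | h
            · rw [h]
            · exact le_of_lt (hw' k (i-1) h (by omega))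
          have := c3 (by omega)
          linarith [hk.2]
        have hkj : k ≤ j := by
          by_contra hc
          push_neg at hc
          have h1 : u' (j+1) ≤ u' k := by
            rcases eq_or_lt_of_le (Nat.succ_le_of_lt hc) with h | h
            · exact le_of_eq (congrArg u' h)
            · exact le_of_lt (hu' (j+1) k h hkn)
          have := c4 (by omega)
          linarith [hk.1]
        constructor
        · rcases eq_or_lt_of_le hkj with h | h
          · rw [h]; exact hux_j
          · exact le_trans (le_of_lt (hu k j h hjn)) hux_j
        · rcases eq_or_lt_of_le hik with h | h
          · rw [← h]; exact hxw_i
          · exact le_trans hxw_i (le_of_lt (hw i k h hkn))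
    by_cases hi0 : i = 0
    · refine ⟨u' j, main (u' j) le_rfl hb1 (by omega) ?_⟩
      intro hjn1
      exact hu' j (j+1) (by omega) hjn1
    · have hi0' : 0 < i := Nat.pos_of_ne_zero hi0
      have hwd : w' (i-1) < w' i := hw' (i-1) i (by omega) hin
      by_cases hjn1 : j + 1 < n
      · have hwu : w' (i-1) < u' (j+1) := by
          have h1 : ¬ (u (j+1) ≤ w (i-1)) :=
            not_le.mpr (lt_trans (hwlt (i-1) (by omega)) (hult (j+1) (by omega) hjn1))
          have h2 := (bridge (i-1) (j+1) (by omega) hjn1).not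
          rw [not_le, not_le] at h2
          exact h2.mp (not_le.mp h1)
        set m := min (w' i) (u' (j+1)) with hmdef
        have hm : w' (i-1) < m := lt_min hwd hwu
        have hm1 : m ≤ w' i := min_le_left _ _
        have hm2 : m ≤ u' (j+1) := min_le_right _ _
        refine ⟨max (u' j) ((w' (i-1) + m)/2), main _ (le_max_left _ _) ?_ ?_ ?_⟩
        · exact max_le hb1 (by linarith)
        · intro _
          exact lt_of_lt_of_le (by linarith) (le_max_right _ _)
        · intro _
          exact max_lt (hu' j (j+1) (by omega) hjn1) (by linarith)
      · refine ⟨max (u' j) ((w' (i-1) + w' i)/2), main _ (le_max_left _ _) ?_ ?_ ?_⟩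
        · exact max_le hb1 (by linarith)
        · intro _
          exact lt_of_lt_of_le (by linarith) (le_max_right _ _)
        · intro h; omega
  · -- no rectangle stabbed by x
    push_neg at hA
    rcases Nat.eq_zero_or_pos n with h0 | h0
    · exact ⟨0, by omega⟩
    · refine ⟨u' 0 - 1, ?_⟩
      intro k hkn
      constructor
      · intro hk
        exact absurd hk.2 (not_le.mpr (hA k hkn hk.1))
      · intro hk
        exfalso
        have h1 : u' 0 ≤ u' k := by
          rcases Nat.eq_zero_or_pos k with h | h
          · rw [h]
          · exact le_of_lt (hu' 0 k h hkn)
        linarith [hk.1]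

/-- Every tower- and nested-pair-free family of bottomless rectangles can be realised
as a family of unit-width bottomless rectangles with an isomorphic dual hypergraph. -/
theorem steps_eq_unit_bottomless (F : Finset BRect) (hF : GenPos F)
    (hfree : ∀ R ∈ F, ∀ R' ∈ F, ¬ TowerPair R R' ∧ ¬ NestedPair R R') :
    ∃ (F' : Finset BRect) (φ : BRect → BRect),
      (∀ R' ∈ F', R'.r - R'.l = 1) ∧
      Set.BijOn φ ↑F ↑F' ∧
      ∀ S : Finset BRect, S ⊆ F →
        ((∃ p : ℝ × ℝ, ∀ R ∈ F, (R.covers p ↔ R ∈ S)) ↔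
          (∃ p' : ℝ × ℝ, ∀ R ∈ F, ((φ R).covers p' ↔ R ∈ S))) := by
  classical
  set L : List BRect := F.toList.mergeSort (fun A B => decide (A.l ≤ B.l)) with hLdef
  have hperm : L.Perm F.toList := List.mergeSort_perm _ _
  have hmemL : ∀ R, R ∈ L ↔ R ∈ F := by
    intro R; rw [hperm.mem_iff, Finset.mem_toList]
  have hnodup : L.Nodup := hperm.nodup_iff.mpr F.nodup_toList
  have hsorted : List.Pairwise (fun A B => (decide (A.l ≤ B.l)) = true) L := by
    apply List.pairwise_mergeSort
    · intro a bb c hab hbc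
      simp only [decide_eq_true_eq] at *
      exact le_trans hab hbc
    · intro a bb
      simp only [Bool.or_eq_true, decide_eq_true_eq]
      exact le_total _ _
  set n := L.length with hndef
  set elt : ℕ → BRect := fun k => if h : k < n then L.get ⟨k, h⟩ else ⟨0, 1, 0, by norm_num⟩
    with heltdef
  have helt : ∀ k (h : k < n), elt k = L.get ⟨k, h⟩ := by
    intro k h; simp [heltdef, h]
  have heltF : ∀ k, k < n → elt k ∈ F := by
    intro k h; rw [helt k h, ← hmemL]; exact L.get_mem ⟨k, h⟩
  have heltne : ∀ i j, i < j → j < n → elt i ≠ elt j := by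
    intro i j hij hj h
    rw [helt i (by omega), helt j hj] at h
    have h2 : i = j := by simpa using (hnodup.get_inj_iff).mp h
    omega
  set lseq : ℕ → ℝ := fun k => (elt k).l with hlseqdef
  set rseq : ℕ → ℝ := fun k => (elt k).r with hrseqdef
  have hlmono : ∀ i j, i < j → j < n → lseq i < lseq j := by
    intro i j hij hj
    have hle : (elt i).l ≤ (elt j).l := by
      have h1 := List.pairwise_iff_get.mp hsorted ⟨i, by omega⟩ ⟨j, hj⟩ (Fin.mk_lt_mk.mpr hij)
      rw [helt i (by omega), helt j hj]
      simpa using h1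
    have hne : (elt i).l ≠ (elt j).l :=
      (hF _ (heltF i (by omega)) _ (heltF j hj) (heltne i j hij hj)).1
    exact lt_of_le_of_ne hle hne
  have hrmono : ∀ i j, i < j → j < n → rseq i < rseq j := by
    intro i j hij hj
    have hA := heltF i (by omega); have hB := heltF j hj
    have hl := hlmono i j hij hj
    by_contra hc
    push_neg at hc
    have hne : (elt j).r ≠ (elt i).r :=
      (hF _ hB _ hA (Ne.symm (heltne i j hij hj))).2.1
    have hrr : (elt j).r < (elt i).r := lt_of_le_of_ne hc hne
    have htne : (elt i).t ≠ (elt j).t :=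
      (hF _ hA _ hB (heltne i j hij hj)).2.2
    rcases lt_or_gt_of_ne htne with ht | ht
    · exact (hfree _ hA _ hB).1 (Or.inl ⟨hl, hrr, ht⟩)
    · exact (hfree _ hA _ hB).2 (Or.inl ⟨hl, hrr, ht⟩)
  have hlr : ∀ k, lseq k ≤ rseq k := fun k => (elt k).hlr
  have hlseq_le : ∀ a c, a ≤ c → c < n → lseq a ≤ lseq c := by
    intro a c hac hc
    rcases eq_or_lt_of_le hac with h | h
    · rw [h]
    · exact le_of_lt (hlmono a c h hc)
  set b : ℕ → ℕ :=
    fun jj => ((Finset.range n).filter (fun k => rseq k < lseq (min jj (n-1)))).card with hbdef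
  have hbmono : Monotone b := by
    intro a c hac
    simp only [hbdef]
    apply Finset.card_le_card
    intro k hk
    simp only [Finset.mem_filter, Finset.mem_range] at hk ⊢
    have hn0 : 0 < n := by omega
    exact ⟨hk.1, lt_of_lt_of_le hk.2 (hlseq_le _ _ (by omega) (by omega))⟩
  have hbb : ∀ j, b j ≤ j := by
    intro j
    rcases Nat.eq_zero_or_pos n with h0 | h0
    · have : b j = 0 := by simp [hbdef, h0]
      omega
    · have hsub : (Finset.range n).filter (fun k => rseq k < lseq (min j (n-1))) ⊆
          Finset.range (min j (n-1)) := by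
        intro k hk
        simp only [Finset.mem_filter, Finset.mem_range] at hk ⊢
        by_contra hc
        push_neg at hc
        have h1 := hlseq_le (min j (n-1)) k hc hk.1
        linarith [hlr k, hk.2]
      have h2 := Finset.card_le_card hsub
      rw [Finset.card_range] at h2
      have h3 : b j ≤ min j (n-1) := h2
      omega
  have hbridge : ∀ i j, i < n → j < n → (lseq j ≤ rseq i ↔ b j ≤ i) := by
    intro i j hi hj
    have hmj : min j (n-1) = j := by omega
    set Sj := (Finset.range n).filter (fun k => rseq k < lseq j) with hSjdef
    have hbj : b j = Sj.card := by
      simp only [hbdef, hmj, hSjdef]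
    have hdc : ∀ k ∈ Sj, ∀ k', k' < k → k' ∈ Sj := by
      intro k hk k' hk'
      simp only [hSjdef, Finset.mem_filter, Finset.mem_range] at hk ⊢
      exact ⟨by omega, lt_trans (hrmono k' k hk' hk.1) hk.2⟩
    have hiff : i ∈ Sj ↔ i < Sj.card := by
      constructor
      · intro hiS
        have hsub : Finset.range (i+1) ⊆ Sj := by
          intro k hk
          simp only [Finset.mem_range] at hk
          rcases eq_or_lt_of_le (Nat.le_of_lt_succ hk) with h | h
          · rwa [h]
          · exact hdc i hiS k h
        have h2 := Finset.card_le_card hsub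
        rw [Finset.card_range] at h2
        omega
      · intro hcard
        by_contra hiS
        have hsub : Sj ⊆ Finset.range i := by
          intro k hk
          simp only [Finset.mem_range]
          by_contra hki
          push_neg at hki
          rcases eq_or_lt_of_le hki with h | h
          · exact hiS (h ▸ hk)
          · exact hiS (hdc k hk i h)
        have h2 := Finset.card_le_card hsub
        rw [Finset.card_range] at h2
        omega
    rw [hbj]
    constructor
    · intro h
      by_contra hc
      push_neg at hc
      have h1 : i ∈ Sj := hiff.mpr hc
      simp only [hSjdef, Finset.mem_filter] at h1
      linarith [h1.2]
    · intro h
      by_contra hc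
      push_neg at hc
      have h1 : i ∈ Sj := by
        simp only [hSjdef, Finset.mem_filter, Finset.mem_range]
        exact ⟨hi, hc⟩
      have h2 := hiff.mp h1
      omega
  set v : ℕ → ℝ := mkv b with hvdef
  have hvmono : ∀ i j, i < j → j < n → v i < v j :=
    fun i j hij _ => mkv_strictMono hbmono hbb hij
  have hwmono : ∀ i j, i < j → j < n → v i + 1 < v j + 1 :=
    fun i j hij hj => by linarith [hvmono i j hij hj]
  have hbridge2 : ∀ i j, i < n → j < n → (lseq j ≤ rseq i ↔ v j ≤ v i + 1) := by
    intro i j hi hj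
    rw [hbridge i j hi hj]
    exact (mkv_key hbmono hbb i j).symm
  set idx : BRect → ℕ := fun R => L.idxOf R with hidxdef
  have hidx : ∀ R ∈ F, idx R < n ∧ elt (idx R) = R := by
    intro R hR
    have hRL : R ∈ L := (hmemL R).mpr hR
    have h1 : idx R < n := List.idxOf_lt_length_iff.mpr hRL
    refine ⟨h1, ?_⟩
    rw [helt _ h1]
    exact List.getElem_idxOf h1
  set φ : BRect → BRect := fun R => ⟨v (idx R), v (idx R) + 1, R.t, by linarith⟩ with hφdef
  refine ⟨F.image φ, φ, ?_, ?_, ?_⟩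
  · intro R' hR'
    rw [Finset.mem_image] at hR'
    obtain ⟨R, _, rfl⟩ := hR'
    simp [hφdef]
  · rw [Finset.coe_image]
    apply Set.InjOn.bijOn_image
    intro R hR R' hR' hEq
    have h1 : v (idx R) = v (idx R') := congrArg BRect.l hEq
    have h2 : idx R = idx R' := (mkv_strictMono hbmono hbb).injective h1
    have h3 := (hidx R hR).2
    have h4 := (hidx R' hR').2
    rw [← h3, ← h4, h2]
  · intro S hS
    constructor
    · rintro ⟨p, hp⟩
      obtain ⟨x', hx'⟩ := stab_transfer n lseq rseq v (fun k => v k + 1)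
        hlmono hrmono hvmono hwmono hbridge2 p.1
      refine ⟨(x', p.2), ?_⟩
      intro R hR
      obtain ⟨h1, h2⟩ := hidx R hR
      have h3 := hx' (idx R) h1
      have hl2 : lseq (idx R) = R.l := congrArg BRect.l h2
      have hr2 : rseq (idx R) = R.r := congrArg BRect.r h2
      rw [hl2, hr2] at h3
      rw [← hp R hR]
      simp only [hφdef, BRect.covers]
      tauto
    · rintro ⟨p', hp'⟩
      have hbridge3 : ∀ i j, i < n → j < n → (v j ≤ v i + 1 ↔ lseq j ≤ rseq i) :=
        fun i j hi hj => (hbridge2 i j hi hj).symm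
      obtain ⟨x, hx⟩ := stab_transfer n v (fun k => v k + 1) lseq rseq
        hvmono hwmono hlmono hrmono hbridge3 p'.1
      refine ⟨(x, p'.2), ?_⟩
      intro R hR
      obtain ⟨h1, h2⟩ := hidx R hR
      have h3 := hx (idx R) h1
      have hl2 : lseq (idx R) = R.l := congrArg BRect.l h2
      have hr2 : rseq (idx R) = R.r := congrArg BRect.r h2
      rw [hl2, hr2] at h3
      rw [← hp' R hR]
      simp only [hφdef, BRect.covers]
      tauto
end

section
/- Let k ≥ 1 and let F be a finite family of bottomless rectangles in general position such that no two rectangles of F form a tower or a nested pair. Then there exists a colouring c : F → {1, …, k} such that every point covered by at least 2k − 1 rectangles of F is covered by all k colours. -/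
/-- The colouring `c` is polychromatic with threshold `N`: every point covered by at
least `N` rectangles of `F` is covered by all `k` colours. -/
def Polychromatic (k N : ℕ) (F : Finset BRect) (c : BRect → Fin k) : Prop :=
  ∀ p : ℝ × ℝ,
    (∃ G ⊆ F, N ≤ G.card ∧ ∀ R ∈ G, R.covers p) →
    ∀ i : Fin k, ∃ R ∈ F, R.covers p ∧ c R = i

namespace StepsProof

open Finset

attribute [local instance] Classical.propDecidable

/-- The rectangles of `F` alive at sweep position `x`. -/
noncomputable def alive (F : Finset BRect) (x : ℝ) : Finset BRect :=
  F.filter fun R => R.l ≤ x ∧ x ≤ R.r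

/-- Number of alive rectangles strictly above `v` (in top coordinate). -/
noncomputable def aboveCnt (F : Finset BRect) (x : ℝ) (v : BRect) : ℕ :=
  ((alive F x).filter fun u => v.t < u.t).card

/-- The top-`m` alive rectangles at `x`. -/
noncomputable def topSet (F : Finset BRect) (m : ℕ) (x : ℝ) : Finset BRect :=
  (alive F x).filter fun v => aboveCnt F x v < m

lemma mem_alive {F : Finset BRect} {x : ℝ} {R : BRect} :
    R ∈ alive F x ↔ R ∈ F ∧ R.l ≤ x ∧ x ≤ R.r := by
  simp [alive]

lemma mem_topSet {F : Finset BRect} {m : ℕ} {x : ℝ} {R : BRect} :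
    R ∈ topSet F m x ↔ R ∈ alive F x ∧ aboveCnt F x R < m := by
  simp [topSet]

/-- `v` is the (strict) top-most alive rectangle at `x`. -/
def IsAliveMax (F : Finset BRect) (v : BRect) (x : ℝ) : Prop :=
  v ∈ alive F x ∧ ∀ u ∈ alive F x, u ≠ v → u.t < v.t

section Steps

variable {F : Finset BRect}
variable (hgen : GenPos F)
variable (hfree : ∀ R ∈ F, ∀ R' ∈ F, ¬ TowerPair R R' ∧ ¬ NestedPair R R')

include hgen hfree in
/-- Steps family: the left and right orders coincide. -/
lemma steps_lr {u v : BRect} (hu : u ∈ F) (hv : v ∈ F) (huv : u ≠ v)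
    (h : u.l < v.l) : u.r < v.r := by
  rcases hgen u hu v hv huv with ⟨-, hr, ht⟩
  rcases lt_or_gt_of_ne hr with h' | h'
  · exact h'
  · rcases lt_or_gt_of_ne ht with ht' | ht'
    · exact absurd (Or.inl ⟨h, h', ht'⟩) (hfree u hu v hv).1
    · exact absurd (Or.inl ⟨h, h', ht'⟩) (hfree u hu v hv).2

include hgen in
lemma t_ne {u v : BRect} (hu : u ∈ F) (hv : v ∈ F) (huv : u ≠ v) : u.t ≠ v.t :=
  (hgen u hu v hv huv).2.2

include hgen hfree in
/-- Key convexity lemma: if `v` is the alive-max at some time `x0`, its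
membership in the top-`m` set is convex in `x`. -/
lemma top_convex {v : BRect} {x0 : ℝ} (hvmax : IsAliveMax F v x0) {m : ℕ}
    {xa xb xc : ℝ} (h1 : xa ≤ xb) (h2 : xb ≤ xc)
    (ha : v ∈ topSet F m xa) (hc : v ∈ topSet F m xc) : v ∈ topSet F m xb := by
  obtain ⟨hva, hacnta⟩ := mem_topSet.1 ha
  obtain ⟨hvc, hacntc⟩ := mem_topSet.1 hc
  obtain ⟨hvF, hla, hra⟩ := mem_alive.1 hva
  obtain ⟨-, hlc, hrc⟩ := mem_alive.1 hvc
  obtain ⟨hv0, hmax0⟩ := hvmax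
  obtain ⟨-, hl0, hr0⟩ := mem_alive.1 hv0
  have hvb : v ∈ alive F xb := mem_alive.2 ⟨hvF, hla.trans h1, h2.trans hrc⟩
  refine mem_topSet.2 ⟨hvb, ?_⟩
  by_contra hcnt
  push_neg at hcnt
  -- U := alive at xb, strictly above v
  set U := (alive F xb).filter (fun u => v.t < u.t) with hU
  have hUcard : m ≤ U.card := hcnt
  rcases le_total x0 xb with hx0 | hx0
  · -- all of U is still above v and alive at xc
    have hsub : U ⊆ (alive F xc).filter (fun u => v.t < u.t) := by
      intro u huU
      obtain ⟨hub, htu⟩ := Finset.mem_filter.1 huU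
      obtain ⟨huF, hlu, hru⟩ := mem_alive.1 hub
      have huv : u ≠ v := fun h => absurd (h ▸ htu) (lt_irrefl _)
      have hnot0 : u ∉ alive F x0 := by
        intro hu0
        exact absurd htu (not_lt.2 (le_of_lt (hmax0 u hu0 huv)))
      have hlu0 : x0 < u.l := by
        by_contra hle
        push_neg at hle
        exact hnot0 (mem_alive.2 ⟨huF, hle, hx0.trans hru⟩)
      have hlvu : v.l < u.l := lt_of_le_of_lt hl0 hlu0
      have hrvu : v.r < u.r :=
        steps_lr hgen hfree hvF huF (fun h => absurd (h ▸ hlvu) (lt_irrefl _)) hlvu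
      refine Finset.mem_filter.2 ⟨mem_alive.2 ⟨huF, hlu.trans h2, le_of_lt (lt_of_le_of_lt hrc hrvu)⟩, htu⟩
    have : m ≤ aboveCnt F xc v := hUcard.trans (Finset.card_le_card hsub)
    exact absurd hacntc (not_lt.2 this)
  · -- symmetric: all of U is above v and alive at xa
    have hsub : U ⊆ (alive F xa).filter (fun u => v.t < u.t) := by
      intro u huU
      obtain ⟨hub, htu⟩ := Finset.mem_filter.1 huU
      obtain ⟨huF, hlu, hru⟩ := mem_alive.1 hub
      have huv : u ≠ v := fun h => absurd (h ▸ htu) (lt_irrefl _)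
      have hnot0 : u ∉ alive F x0 := by
        intro hu0
        exact absurd htu (not_lt.2 (le_of_lt (hmax0 u hu0 huv)))
      have hru0 : u.r < x0 := by
        by_contra hle
        push_neg at hle
        exact hnot0 (mem_alive.2 ⟨huF, hlu.trans hx0, hle⟩)
      have hrvu : u.r < v.r := lt_of_lt_of_le hru0 hr0
      have hlvu : u.l < v.l := by
        rcases lt_trichotomy u.l v.l with h | h | h
        · exact h
        · exact absurd h (hgen u huF v hvF huv).1
        · exact absurd (steps_lr hgen hfree hvF huF (Ne.symm huv) h)
            (not_lt.2 (le_of_lt hrvu))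
      refine Finset.mem_filter.2 ⟨mem_alive.2 ⟨huF, le_of_lt (lt_of_lt_of_le hlvu hla), h1.trans hru⟩, htu⟩
    have : m ≤ aboveCnt F xa v := hUcard.trans (Finset.card_le_card hsub)
    exact absurd hacnta (not_lt.2 this)

include hgen in
/-- If at least `m` rectangles are alive, the top set has at least `m` elements. -/
lemma card_topSet {m : ℕ} {x : ℝ} (h : m ≤ (alive F x).card) :
    m ≤ (topSet F m x).card := by
  classical
  set A := alive F x with hA
  have hsplit :
      (A.filter fun v => aboveCnt F x v < m).card
        + (A.filter fun v => ¬ aboveCnt F x v < m).card = A.card :=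
    Finset.card_filter_add_card_filter_not _
  have htopeq : topSet F m x = A.filter fun v => aboveCnt F x v < m := rfl
  have hinj : ∀ u ∈ A, ∀ v ∈ A, u ≠ v → aboveCnt F x u ≠ aboveCnt F x v := by
    intro u hu v hv huv
    have huF : u ∈ F := (mem_alive.1 hu).1
    have hvF : v ∈ F := (mem_alive.1 hv).1
    have hmono : ∀ a b : BRect, a ∈ A → b ∈ A → a.t < b.t →
        aboveCnt F x b < aboveCnt F x a := by
      intro a b haA hbA htab
      apply Finset.card_lt_card
      constructor
      · intro w hw
        obtain ⟨hwA, htw⟩ := Finset.mem_filter.1 hw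
        exact Finset.mem_filter.2 ⟨hwA, htab.trans htw⟩
      · intro hsub
        have : b ∈ A.filter fun w => b.t < w.t :=
          hsub (Finset.mem_filter.2 ⟨hbA, htab⟩)
        exact absurd (Finset.mem_filter.1 this).2 (lt_irrefl _)
    rcases lt_trichotomy u.t v.t with h' | h' | h'
    · exact (hmono u v hu hv h').ne'
    · exact absurd h' (t_ne hgen huF hvF huv)
    · exact (hmono v u hv hu h').ne
  have hbad : (A.filter fun v => ¬ aboveCnt F x v < m).card ≤ A.card - m := by
    have hmaps : ∀ v ∈ (A.filter fun v => ¬ aboveCnt F x v < m),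
        aboveCnt F x v ∈ Finset.Ico m A.card := by
      intro v hv
      obtain ⟨hvA, hge⟩ := Finset.mem_filter.1 hv
      push_neg at hge
      refine Finset.mem_Ico.2 ⟨hge, ?_⟩
      have : (A.filter fun u => v.t < u.t) ⊆ A.erase v := by
        intro w hw
        obtain ⟨hwA, htw⟩ := Finset.mem_filter.1 hw
        exact Finset.mem_erase.2 ⟨fun h => absurd (h ▸ htw) (lt_irrefl _), hwA⟩
      calc aboveCnt F x v ≤ (A.erase v).card := Finset.card_le_card this
        _ < A.card := Finset.card_erase_lt_of_mem hvA
    have hinj' : Set.InjOn (aboveCnt F x)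
        ↑(A.filter fun v => ¬ aboveCnt F x v < m) := by
      intro u hu v hv h
      by_contra huv
      exact hinj u (Finset.mem_filter.1 (Finset.mem_coe.1 hu)).1
        v (Finset.mem_filter.1 (Finset.mem_coe.1 hv)).1 huv h
    calc (A.filter fun v => ¬ aboveCnt F x v < m).card
        ≤ (Finset.Ico m A.card).card := Finset.card_le_card_of_injOn _ hmaps hinj'
      _ = A.card - m := Nat.card_Ico _ _
  rw [htopeq]
  omega

include hgen in
/-- The alive-max element witnesses coverage of the top set. -/
lemma exists_max_top {m : ℕ} (hm : 0 < m) {x : ℝ} (h : m ≤ (alive F x).card) :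
    ∃ v, IsAliveMax F v x ∧ v ∈ topSet F m x := by
  have hne : (alive F x).Nonempty := Finset.card_pos.1 (lt_of_lt_of_le hm h)
  obtain ⟨v, hv, hmax⟩ := Finset.exists_max_image (alive F x) (fun R => R.t) hne
  have hvmax : IsAliveMax F v x := by
    refine ⟨hv, fun u hu huv => ?_⟩
    have := hmax u hu
    rcases lt_or_eq_of_le this with h' | h'
    · exact h'
    · exact absurd h' (t_ne hgen (mem_alive.1 hu).1 (mem_alive.1 hv).1 huv)
  refine ⟨v, hvmax, mem_topSet.2 ⟨hv, ?_⟩⟩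
  have : (alive F x).filter (fun u => v.t < u.t) = ∅ := by
    apply Finset.filter_false_of_mem
    intro u hu
    exact not_lt.2 (hmax u hu)
  simpa [aboveCnt, this] using hm

end Steps

/-- Helper: two convex predicates sharing a point cannot have mutually exclusive
points on the same side. -/
lemma pair_side {Ma Mb : ℝ → Prop}
    (ca : ∀ {p q r : ℝ}, p ≤ q → q ≤ r → Ma p → Ma r → Ma q)
    (cb : ∀ {p q r : ℝ}, p ≤ q → q ≤ r → Mb p → Mb r → Mb q)
    {x0 ya yb : ℝ} (h0a : Ma x0) (h0b : Mb x0)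
    (hya : Ma ya) (hnb : ¬ Mb ya) (hyb : Mb yb) (hna : ¬ Ma yb)
    (hside : (ya ≤ x0 ∧ yb ≤ x0) ∨ (x0 ≤ ya ∧ x0 ≤ yb)) : False := by
  rcases hside with ⟨s1, s2⟩ | ⟨s1, s2⟩ <;> rcases le_total ya yb with h | h
  · exact hna (ca h s2 hya h0a)
  · exact hnb (cb h s1 hyb h0b)
  · exact hnb (cb s1 h h0b hyb)
  · exact hna (ca s2 h h0a hya)

/-- Of three convex predicates through a common point, one is contained in the
union of the other two. -/
lemma three_convex {Ma Mb Mc : ℝ → Prop}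
    (ca : ∀ {p q r : ℝ}, p ≤ q → q ≤ r → Ma p → Ma r → Ma q)
    (cb : ∀ {p q r : ℝ}, p ≤ q → q ≤ r → Mb p → Mb r → Mb q)
    (cc : ∀ {p q r : ℝ}, p ≤ q → q ≤ r → Mc p → Mc r → Mc q)
    {x0 : ℝ} (h0a : Ma x0) (h0b : Mb x0) (h0c : Mc x0) :
    (∀ y, Ma y → Mb y ∨ Mc y) ∨ (∀ y, Mb y → Ma y ∨ Mc y)
      ∨ (∀ y, Mc y → Ma y ∨ Mb y) := by
  by_contra h
  push_neg at h
  obtain ⟨⟨ya, hya, hab, hac⟩, ⟨yb, hyb, hba, hbc⟩, ⟨yc, hyc, hca, hcb⟩⟩ := h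
  rcases le_total ya x0 with sa | sa <;> rcases le_total yb x0 with sb | sb <;>
    rcases le_total yc x0 with sc | sc
  · exact pair_side ca cb h0a h0b hya hab hyb hba (Or.inl ⟨sa, sb⟩)
  · exact pair_side ca cb h0a h0b hya hab hyb hba (Or.inl ⟨sa, sb⟩)
  · exact pair_side ca cc h0a h0c hya hac hyc hca (Or.inl ⟨sa, sc⟩)
  · exact pair_side cb cc h0b h0c hyb hbc hyc hcb (Or.inr ⟨sb, sc⟩)
  · exact pair_side cb cc h0b h0c hyb hbc hyc hcb (Or.inl ⟨sb, sc⟩)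
  · exact pair_side ca cc h0a h0c hya hac hyc hca (Or.inr ⟨sa, sc⟩)
  · exact pair_side ca cb h0a h0b hya hab hyb hba (Or.inr ⟨sa, sb⟩)
  · exact pair_side ca cb h0a h0b hya hab hyb hba (Or.inr ⟨sa, sb⟩)

/-- The shallow hitting set: a set `S ⊆ F` hitting every top-`m` set
(at positions where at least `m` rectangles are alive) at least once and at
most twice. -/
lemma exists_shallow {F : Finset BRect} (hgen : GenPos F)
    (hfree : ∀ R ∈ F, ∀ R' ∈ F, ¬ TowerPair R R' ∧ ¬ NestedPair R R')
    (m : ℕ) (hm : 0 < m) :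
    ∃ S : Finset BRect, S ⊆ F ∧
      (∀ x : ℝ, m ≤ (alive F x).card → ∃ s ∈ S, s ∈ topSet F m x) ∧
      (∀ x : ℝ, ((topSet F m x).filter (· ∈ S)).card ≤ 2) := by
  classical
  -- the set of rectangles that are alive-max at some time
  set Z : Finset BRect := F.filter (fun v => ∃ x : ℝ, IsAliveMax F v x) with hZ
  set good : Finset BRect → Prop :=
    fun S => ∀ x : ℝ, m ≤ (alive F x).card → ∃ s ∈ S, s ∈ topSet F m x with hgood
  have hZgood : good Z := by
    intro x hx
    obtain ⟨v, hvmax, hvtop⟩ := exists_max_top hgen hm hx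
    have hvF : v ∈ F := (mem_alive.1 hvmax.1).1
    exact ⟨v, Finset.mem_filter.2 ⟨hvF, x, hvmax⟩, hvtop⟩
  set P : Finset (Finset BRect) := Z.powerset.filter good with hP
  have hPne : P.Nonempty := ⟨Z, Finset.mem_filter.2 ⟨Finset.mem_powerset_self Z, hZgood⟩⟩
  obtain ⟨S, hSP, hSmin⟩ := Finset.exists_min_image P Finset.card hPne
  obtain ⟨hSpow, hSgood⟩ := Finset.mem_filter.1 hSP
  have hSZ : S ⊆ Z := Finset.mem_powerset.1 hSpow
  have hSF : S ⊆ F := hSZ.trans (Finset.filter_subset _ _)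
  refine ⟨S, hSF, hSgood, ?_⟩
  intro x
  by_contra hply
  push_neg at hply
  obtain ⟨a, ha, b, hb, c, hc, hab, hac, hbc⟩ := Finset.two_lt_card.1 hply
  obtain ⟨haT, haS⟩ := Finset.mem_filter.1 ha
  obtain ⟨hbT, hbS⟩ := Finset.mem_filter.1 hb
  obtain ⟨hcT, hcS⟩ := Finset.mem_filter.1 hc
  -- each of a, b, c is alive-max at some time, so its top-membership is convex
  have hconv : ∀ v ∈ S, ∀ {p q r : ℝ}, p ≤ q → q ≤ r →
      v ∈ topSet F m p → v ∈ topSet F m r → v ∈ topSet F m q := by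
    intro v hvS p q r h1 h2 hp hr
    obtain ⟨-, x0, hvmax⟩ := Finset.mem_filter.1 (hSZ hvS)
    exact top_convex hgen hfree hvmax h1 h2 hp hr
  -- dropping a redundant element contradicts minimality
  have drop : ∀ z w₁ w₂ : BRect, z ∈ S → w₁ ∈ S → w₂ ∈ S → z ≠ w₁ → z ≠ w₂ →
      (∀ y : ℝ, z ∈ topSet F m y → w₁ ∈ topSet F m y ∨ w₂ ∈ topSet F m y) →
      False := by
    intro z w₁ w₂ hzS hw1S hw2S hzw1 hzw2 hred
    have hS' : (S.erase z) ∈ P := by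
      refine Finset.mem_filter.2 ⟨Finset.mem_powerset.2
        ((Finset.erase_subset _ _).trans hSZ), ?_⟩
      intro y hy
      obtain ⟨s, hsS, hstop⟩ := hSgood y hy
      by_cases hsz : s = z
      · rcases hred y (hsz ▸ hstop) with h' | h'
        · exact ⟨w₁, Finset.mem_erase.2 ⟨Ne.symm hzw1, hw1S⟩, h'⟩
        · exact ⟨w₂, Finset.mem_erase.2 ⟨Ne.symm hzw2, hw2S⟩, h'⟩
      · exact ⟨s, Finset.mem_erase.2 ⟨hsz, hsS⟩, hstop⟩
    have := hSmin _ hS'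
    have hlt : (S.erase z).card < S.card := Finset.card_erase_lt_of_mem hzS
    omega
  rcases three_convex (fun {p q r} h1 h2 => hconv a haS h1 h2)
      (fun {p q r} h1 h2 => hconv b hbS h1 h2)
      (fun {p q r} h1 h2 => hconv c hcS h1 h2) haT hbT hcT with h | h | h
  · exact drop a b c haS hbS hcS hab hac h
  · exact drop b a c hbS haS hcS (Ne.symm hab) hbc h
  · exact drop c a b hcS haS hbS (Ne.symm hac) (Ne.symm hbc) h

/-- Main induction: `n+1` colours, threshold `2(n+1) - 1`. -/
lemma aux (n : ℕ) : ∀ F : Finset BRect, GenPos F →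
    (∀ R ∈ F, ∀ R' ∈ F, ¬ TowerPair R R' ∧ ¬ NestedPair R R') →
    ∃ c : BRect → Fin (n + 1), Polychromatic (n + 1) (2 * (n + 1) - 1) F c := by
  classical
  induction n with
  | zero =>
    intro F hgen hfree
    refine ⟨fun _ => 0, ?_⟩
    rintro p ⟨G, hGF, hcard, hcov⟩ i
    obtain ⟨R, hR⟩ := Finset.card_pos.1 (by omega : 0 < G.card)
    haveI : Subsingleton (Fin (0 + 1)) := ⟨fun a b => Fin.ext (by omega)⟩
    exact ⟨R, hGF hR, hcov R hR, Subsingleton.elim _ _⟩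
  | succ n ih =>
    intro F hgen hfree
    set m : ℕ := 2 * (n + 2) - 1 with hm
    obtain ⟨S, hSF, hScov, hSply⟩ := exists_shallow hgen hfree m (by omega)
    set F' : Finset BRect := F \ S with hF'
    have hF'F : F' ⊆ F := Finset.sdiff_subset
    have hgen' : GenPos F' := fun R hR R' hR' hne => hgen R (hF'F hR) R' (hF'F hR') hne
    have hfree' : ∀ R ∈ F', ∀ R' ∈ F', ¬ TowerPair R R' ∧ ¬ NestedPair R R' :=
      fun R hR R' hR' => hfree R (hF'F hR) R' (hF'F hR')
    obtain ⟨c', hc'⟩ := ih F' hgen' hfree'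
    refine ⟨fun R => if R ∈ S then Fin.last (n + 1) else (c' R).castSucc, ?_⟩
    rintro p ⟨G, hGF, hcard, hcov⟩ i
    set E : Finset BRect := F.filter (fun R => R.covers p) with hE
    have hGE : G ⊆ E := fun R hR => Finset.mem_filter.2 ⟨hGF hR, hcov R hR⟩
    have hEcard : m ≤ E.card := by
      have := Finset.card_le_card hGE
      omega
    have hEalive : E ⊆ alive F p.1 := by
      intro R hR
      obtain ⟨hRF, hcovR⟩ := Finset.mem_filter.1 hR
      exact mem_alive.2 ⟨hRF, hcovR.1, hcovR.2.1⟩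
    have halive : m ≤ (alive F p.1).card :=
      hEcard.trans (Finset.card_le_card hEalive)
    set T : Finset BRect := topSet F m p.1 with hT
    have hTE : T ⊆ E := by
      intro v hv
      obtain ⟨hva, hvcnt⟩ := mem_topSet.1 hv
      obtain ⟨hvF, hvl, hvr⟩ := mem_alive.1 hva
      refine Finset.mem_filter.2 ⟨hvF, hvl, hvr, ?_⟩
      by_contra hyt
      push_neg at hyt
      have hsub : E ⊆ (alive F p.1).filter (fun u => v.t < u.t) := by
        intro u hu
        obtain ⟨huF, hcovu⟩ := Finset.mem_filter.1 hu
        exact Finset.mem_filter.2 ⟨mem_alive.2 ⟨huF, hcovu.1, hcovu.2.1⟩,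
          lt_of_lt_of_le hyt hcovu.2.2⟩
      have : m ≤ aboveCnt F p.1 v := hEcard.trans (Finset.card_le_card hsub)
      omega
    rcases Fin.eq_castSucc_or_eq_last i with ⟨j, rfl⟩ | rfl
    · -- find colour j among F' = F \ S
      have hTcard : m ≤ T.card := card_topSet hgen halive
      have hsplit : (T.filter (· ∈ S)).card + (T.filter (· ∉ S)).card = T.card :=
        Finset.card_filter_add_card_filter_not _
      have hply : (T.filter (· ∈ S)).card ≤ 2 := hSply p.1
      set G' : Finset BRect := T.filter (· ∉ S) with hG'
      have hG'F' : G' ⊆ F' := by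
        intro v hv
        obtain ⟨hvT, hvS⟩ := Finset.mem_filter.1 hv
        exact Finset.mem_sdiff.2 ⟨(Finset.mem_filter.1 (hTE hvT)).1, hvS⟩
      have hG'card : 2 * (n + 1) - 1 ≤ G'.card := by omega
      have hG'cov : ∀ R ∈ G', R.covers p := by
        intro R hR
        exact (Finset.mem_filter.1 (hTE (Finset.mem_filter.1 hR).1)).2
      obtain ⟨R, hRF', hRcov, hRc⟩ := hc' p ⟨G', hG'F', hG'card, hG'cov⟩ j
      refine ⟨R, hF'F hRF', hRcov, ?_⟩
      have hRS : R ∉ S := (Finset.mem_sdiff.1 hRF').2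
      simp [hRS, hRc]
    · -- find colour `last` in S
      obtain ⟨s, hsS, hstop⟩ := hScov p.1 halive
      have hsE : s ∈ E := hTE hstop
      obtain ⟨hsF, hscov⟩ := Finset.mem_filter.1 hsE
      exact ⟨s, hsF, hscov, by simp [hsS]⟩

end StepsProof

/-- For tower- and nested-pair-free ("steps") families, `m_k^* ≤ 2k - 1`. -/
theorem steps_mk_le (k : ℕ) (hk : 1 ≤ k) (F : Finset BRect) (hF : GenPos F)
    (hfree : ∀ R ∈ F, ∀ R' ∈ F, ¬ TowerPair R R' ∧ ¬ NestedPair R R') :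
    ∃ c : BRect → Fin k, Polychromatic k (2 * k - 1) F c := by
  obtain ⟨n, rfl⟩ : ∃ n, k = n + 1 := ⟨k - 1, by omega⟩
  exact StepsProof.aux n F hF hfree
end

section
/- Let R₁, R₂, R₃ be bottomless rectangles with pairwise distinct left coordinates, pairwise distinct right coordinates, and pairwise distinct top coordinates, with left coordinates satisfying l₁ < l₂ < l₃, and suppose that no two of R₁, R₂, R₃ form a tower. Then there do not exist points p, q ∈ ℝ² such that p is covered by R₁ and by R₃ but not by R₂, while q is covered by R₂ but neither by R₁ nor by R₃. -/
/-- ABA-freeness for tower-free triples of bottomless rectangles: there are no points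
`p ∈ (R₁ ∩ R₃) \ R₂` and `q ∈ R₂ \ (R₁ ∪ R₃)`. -/
theorem towerfree_ABA_free (R₁ R₂ R₃ : BRect)
    (hl : R₁.l < R₂.l ∧ R₂.l < R₃.l)
    (hr : R₁.r ≠ R₂.r ∧ R₁.r ≠ R₃.r ∧ R₂.r ≠ R₃.r)
    (ht : R₁.t ≠ R₂.t ∧ R₁.t ≠ R₃.t ∧ R₂.t ≠ R₃.t)
    (htower : ¬ TowerPair R₁ R₂ ∧ ¬ TowerPair R₁ R₃ ∧ ¬ TowerPair R₂ R₃) :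
    ¬ ∃ p q : ℝ × ℝ,
        (R₁.covers p ∧ R₃.covers p ∧ ¬ R₂.covers p) ∧
        (R₂.covers q ∧ ¬ R₁.covers q ∧ ¬ R₃.covers q) := by
  rintro ⟨p, q, ⟨hp1, hp3, hp2⟩, hq2, hq1, hq3⟩
  obtain ⟨hl12, hl23⟩ := hl
  simp only [BRect.covers, TowerPair, not_or, not_and, not_le, not_lt] at *
  obtain ⟨hp1l, hp1r, hp1t⟩ := hp1
  obtain ⟨hp3l, hp3r, hp3t⟩ := hp3
  obtain ⟨hq2l, hq2r, hq2t⟩ := hq2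
  -- p not covered by R₂ : since R₂.l ≤ p.1, either p.1 > R₂.r or p.2 > R₂.t
  have hp2' : R₂.r < p.1 ∨ R₂.t < p.2 := by
    rcases lt_or_ge R₂.r p.1 with h | h
    · exact Or.inl h
    · exact Or.inr (hp2 (by linarith) h)
  have hq1' : R₁.r < q.1 ∨ R₁.t < q.2 := by
    rcases lt_or_ge R₁.r q.1 with h | h
    · exact Or.inl h
    · exact Or.inr (hq1 (by linarith) h)
  have hq3' : q.1 < R₃.l ∨ R₃.r < q.1 ∨ R₃.t < q.2 := by
    rcases lt_or_ge q.1 R₃.l with h | h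
    · exact Or.inl h
    · rcases lt_or_ge R₃.r q.1 with h2 | h2
      · exact Or.inr (Or.inl h2)
      · exact Or.inr (Or.inr (hq3 h h2))
  obtain ⟨ht12, ht13, ht23⟩ := htower
  rcases hp2' with hx | hy
  · -- R₂.r < p.1 ≤ R₁.r so R₂.r < R₁.r, tower-free gives R₂.t < R₁.t
    have hrr : R₂.r < R₁.r := by linarith
    have htt : R₂.t < R₁.t :=
      lt_of_le_of_ne (ht12.1 hl12 hrr) (Ne.symm ht.1)
    rcases hq1' with h | h
    · linarith
    · linarith
  · -- R₂.t < p.2 ≤ R₁.t, R₃.t : tower-free R₂R₃ gives R₂.r < R₃.r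
    have ht21 : R₂.t < R₁.t := by linarith
    have ht23' : R₂.t < R₃.t := by linarith
    have h1 : ¬ R₃.r < R₂.r := fun hc => absurd ht23' (not_lt.2 (ht23.1 hl23 hc))
    have hrr : R₂.r < R₃.r := lt_of_le_of_ne (not_lt.1 h1) hr.2.2
    have hu1 : R₁.r < q.1 := by
      rcases hq1' with h | h
      · exact h
      · linarith
    rcases hq3' with h | h | h
    · linarith
    · linarith
    · linarith
end

section
/- Let k ≥ 1 and let F be a finite family of bottomless rectangles in general position such that no two rectangles of F form a tower. Then there exists a colouring c : F → {1, …, k} such that every point covered by at least 2k − 1 rectangles of F is covered by all k colours. -/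
namespace TowerfreeProof

attribute [local instance] Classical.propDecidable

open Finset

noncomputable section

/-- Rectangles of `F` whose x-interval contains `x`. -/
def Tset (F : Finset BRect) (x : ℝ) : Finset BRect :=
  F.filter fun R => R.l ≤ x ∧ x ≤ R.r

/-- Rectangles of `F` containing `x` strictly above `R`. -/
def Above (F : Finset BRect) (x : ℝ) (R : BRect) : Finset BRect :=
  (Tset F x).filter fun H => R.t < H.t

/-- The (at most) `m` highest rectangles of `F` at `x`. -/
def Eset (F : Finset BRect) (m : ℕ) (x : ℝ) : Finset BRect :=
  (Tset F x).filter fun R => (Above F x R).card < m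

/-- `x` is covered by at least `m` rectangles. -/
def Deep (F : Finset BRect) (m : ℕ) (x : ℝ) : Prop :=
  m ≤ (Tset F x).card

lemma mem_Tset {F : Finset BRect} {x : ℝ} {R : BRect} :
    R ∈ Tset F x ↔ R ∈ F ∧ R.l ≤ x ∧ x ≤ R.r := by
  simp [Tset, mem_filter, and_assoc]

lemma mem_Eset {F : Finset BRect} {m : ℕ} {x : ℝ} {R : BRect} :
    R ∈ Eset F m x ↔ R ∈ Tset F x ∧ (Above F x R).card < m := by
  simp [Eset, mem_filter]

lemma mem_Above {F : Finset BRect} {x : ℝ} {R H : BRect} :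
    H ∈ Above F x R ↔ H ∈ Tset F x ∧ R.t < H.t := by
  simp [Above, mem_filter]

lemma Eset_subset_Tset {F : Finset BRect} {m : ℕ} {x : ℝ} :
    Eset F m x ⊆ Tset F x := filter_subset _ _

lemma Tset_subset {F : Finset BRect} {x : ℝ} : Tset F x ⊆ F := filter_subset _ _

lemma t_injOn {F : Finset BRect} (hF : GenPos F) {R R' : BRect}
    (hR : R ∈ F) (hR' : R' ∈ F) (h : R.t = R'.t) : R = R' := by
  by_contra hne
  exact (hF R hR R' hR' hne).2.2 h

/-- (F2) everything above a member of `Eset` is in `Eset`. -/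
lemma mem_Eset_of_above {F : Finset BRect} {m : ℕ} {x : ℝ} {R H : BRect}
    (hR : R ∈ Eset F m x) (hH : H ∈ Tset F x) (ht : R.t < H.t) : H ∈ Eset F m x := by
  rw [mem_Eset] at hR ⊢
  refine ⟨hH, lt_of_le_of_lt ?_ hR.2⟩
  have hsub : Above F x H ⊆ Above F x R := by
    intro P hP
    rw [mem_Above] at hP ⊢
    exact ⟨hP.1, lt_trans ht hP.2⟩
  have hss : Above F x H ⊂ Above F x R := by
    refine Finset.ssubset_iff_of_subset hsub |>.mpr ⟨H, ?_, ?_⟩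
    · rw [mem_Above]; exact ⟨hH, ht⟩
    · rw [mem_Above]; intro h; exact lt_irrefl _ h.2
  exact le_of_lt (card_lt_card hss) |>.trans (le_refl _)

/-- (F3) if `R` is at `x` but not in `Eset`, every `Eset` member is above `R`. -/
lemma lt_t_of_notMem_Eset {F : Finset BRect} (hF : GenPos F) {m : ℕ} {x : ℝ} {R H : BRect}
    (hR : R ∈ Tset F x) (hRE : R ∉ Eset F m x) (hH : H ∈ Eset F m x) : R.t < H.t := by
  rcases lt_trichotomy R.t H.t with h | h | h
  · exact h
  · exact absurd (t_injOn hF (Tset_subset hR) (Tset_subset (Eset_subset_Tset hH)) h ▸ hH) hRE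
  · exact absurd (mem_Eset_of_above hH hR h) hRE

/-- Above-sets are strict subsets of `Tset` (for members). -/
lemma above_card_lt {F : Finset BRect} {x : ℝ} {R : BRect} (hR : R ∈ Tset F x) :
    (Above F x R).card < (Tset F x).card := by
  apply card_lt_card
  refine Finset.ssubset_iff_of_subset (fun P hP => (mem_Above.mp hP).1) |>.mpr ⟨R, hR, ?_⟩
  rw [mem_Above]; intro h; exact lt_irrefl _ h.2

lemma above_card_strict_anti {F : Finset BRect} {x : ℝ} {R R' : BRect}
    (hR : R ∈ Tset F x) (hR' : R' ∈ Tset F x) (ht : R.t < R'.t) :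
    (Above F x R').card < (Above F x R).card := by
  apply card_lt_card
  refine Finset.ssubset_iff_of_subset ?_ |>.mpr ⟨R', ?_, ?_⟩
  · intro P hP
    rw [mem_Above] at hP ⊢
    exact ⟨hP.1, lt_trans ht hP.2⟩
  · rw [mem_Above]; exact ⟨hR', ht⟩
  · rw [mem_Above]; intro h; exact lt_irrefl _ h.2

/-- (F1) at a deep point, `Eset` has exactly `m` elements. -/
lemma card_Eset {F : Finset BRect} (hF : GenPos F) {m : ℕ} {x : ℝ} (hd : Deep F m x) :
    (Eset F m x).card = m := by
  classical
  have hinj : Set.InjOn (fun R => (Above F x R).card) (Tset F x) := by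
    intro R hR R' hR' heq
    simp only at heq
    by_contra hne
    have hR2 : R ∈ Tset F x := hR
    have hR2' : R' ∈ Tset F x := hR'
    have htne : R.t ≠ R'.t := fun h =>
      hne (t_injOn hF (Tset_subset hR2) (Tset_subset hR2') h)
    rcases lt_or_gt_of_ne htne with h | h
    · exact (ne_of_gt (above_card_strict_anti hR2 hR2' h)) heq
    · exact (ne_of_lt (above_card_strict_anti hR2' hR2 h)) heq
  have himg : (Tset F x).image (fun R => (Above F x R).card)
      = Finset.range (Tset F x).card := by
    apply Finset.eq_of_subset_of_card_le
    · intro j hj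
      rw [Finset.mem_image] at hj
      obtain ⟨R, hR, rfl⟩ := hj
      rw [Finset.mem_range]
      exact above_card_lt hR
    · rw [Finset.card_range, Finset.card_image_of_injOn hinj]
  have hmn : m ≤ (Tset F x).card := hd
  have hEimg : (Eset F m x).image (fun R => (Above F x R).card) = Finset.range m := by
    apply Finset.Subset.antisymm
    · intro j hj
      rw [Finset.mem_image] at hj
      obtain ⟨R, hR, rfl⟩ := hj
      rw [Finset.mem_range]
      exact (mem_Eset.mp hR).2
    · intro j hj
      rw [Finset.mem_range] at hj
      have : j ∈ (Tset F x).image (fun R => (Above F x R).card) := by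
        rw [himg, Finset.mem_range]; exact lt_of_lt_of_le hj hmn
      rw [Finset.mem_image] at this
      obtain ⟨R, hR, rfl⟩ := this
      rw [Finset.mem_image]
      exact ⟨R, mem_Eset.mpr ⟨hR, hj⟩, rfl⟩
  have hsub : (Eset F m x : Set BRect) ⊆ (Tset F x : Set BRect) := by
    intro R hR; exact Eset_subset_Tset hR
  have hc := Finset.card_image_of_injOn (hinj.mono hsub)
  rw [hEimg, Finset.card_range] at hc
  exact hc.symm

/-- Rank of a rectangle: number of rectangles of `F` strictly below it. -/
def rnk (F : Finset BRect) (R : BRect) : ℕ :=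
  (F.filter fun P => P.t < R.t).card

lemma rnk_lt_rnk {F : Finset BRect} {P Q : BRect} (hP : P ∈ F) (ht : P.t < Q.t) :
    rnk F P < rnk F Q := by
  apply card_lt_card
  refine Finset.ssubset_iff_of_subset ?_ |>.mpr ⟨P, ?_, ?_⟩
  · intro H hH
    rw [mem_filter] at hH ⊢
    exact ⟨hH.1, lt_trans hH.2 ht⟩
  · rw [mem_filter]; exact ⟨hP, ht⟩
  · rw [mem_filter]; intro h; exact lt_irrefl _ h.2

lemma rnk_lt_card {F : Finset BRect} {R : BRect} (hR : R ∈ F) : rnk F R < F.card := by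
  apply card_lt_card
  refine Finset.ssubset_iff_of_subset (filter_subset _ _) |>.mpr ⟨R, hR, ?_⟩
  rw [mem_filter]; intro h; exact lt_irrefl _ h.2

/-- The greedy condition: `R` is the top rectangle at some deep `x` whose
`Eset` is not yet hit by `S`. -/
def Cond (F : Finset BRect) (m : ℕ) (R : BRect) (S : Finset BRect) : Prop :=
  ∃ x : ℝ, Deep F m x ∧ R ∈ Tset F x ∧ (∀ H ∈ Tset F x, H.t ≤ R.t) ∧
    Eset F m x ∩ S = ∅

/-- Stages of the greedy construction, processing rectangles in increasing `t`. -/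
def fS (F : Finset BRect) (m : ℕ) : ℕ → Finset BRect
  | 0 => ∅
  | n + 1 => fS F m n ∪ F.filter fun R => rnk F R = n ∧ Cond F m R (fS F m n)

/-- The selected (hitting) set. -/
def Sel (F : Finset BRect) (m : ℕ) : Finset BRect := fS F m F.card

lemma fS_mono {F : Finset BRect} {m : ℕ} : Monotone (fS F m) := by
  apply monotone_nat_of_le_succ
  intro n
  rw [fS]
  exact Finset.subset_union_left

lemma mem_fS_iff {F : Finset BRect} {m : ℕ} {R : BRect} : ∀ {n : ℕ},
    R ∈ fS F m n ↔ R ∈ F ∧ rnk F R < n ∧ Cond F m R (fS F m (rnk F R))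
  | 0 => by simp [fS]
  | n + 1 => by
    rw [fS, Finset.mem_union, mem_filter, mem_fS_iff (n := n)]
    constructor
    · rintro (⟨h1, h2, h3⟩ | ⟨h1, h2, h3⟩)
      · exact ⟨h1, Nat.lt_succ_of_lt h2, h3⟩
      · exact ⟨h1, by omega, h2 ▸ h3⟩
    · rintro ⟨h1, h2, h3⟩
      rcases Nat.lt_succ_iff_lt_or_eq.mp h2 with h | h
      · exact Or.inl ⟨h1, h, h3⟩
      · exact Or.inr ⟨h1, h, h ▸ h3⟩

lemma fS_subset_Sel {F : Finset BRect} {m : ℕ} (n : ℕ) : fS F m n ⊆ Sel F m := by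
  intro R hR
  rw [mem_fS_iff] at hR
  exact mem_fS_iff.mpr ⟨hR.1, rnk_lt_card hR.1, hR.2.2⟩

lemma Sel_subset {F : Finset BRect} {m : ℕ} : Sel F m ⊆ F := by
  intro R hR; exact (mem_fS_iff.mp hR).1

/-- Characterization of the "already selected and strictly lower" set. -/
lemma mem_fS_rnk_iff {F : Finset BRect} (hF : GenPos F) {m : ℕ} {Q P : BRect}
    (hQ : Q ∈ F) : P ∈ fS F m (rnk F Q) ↔ P ∈ Sel F m ∧ P.t < Q.t := by
  constructor
  · intro h
    obtain ⟨hPF, hrnk, hcond⟩ := mem_fS_iff.mp h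
    refine ⟨fS_subset_Sel _ h, ?_⟩
    rcases lt_trichotomy P.t Q.t with ht | ht | ht
    · exact ht
    · exact absurd (t_injOn hF hPF hQ ht ▸ hrnk) (lt_irrefl _)
    · exact absurd (lt_trans hrnk (rnk_lt_rnk hQ ht)) (lt_irrefl _)
  · rintro ⟨hPS, ht⟩
    obtain ⟨hPF, _, hcond⟩ := mem_fS_iff.mp hPS
    exact mem_fS_iff.mpr ⟨hPF, rnk_lt_rnk hPF ht, hcond⟩

/-- The hitting property: every deep point has its `Eset` hit by `Sel`. -/
lemma Sel_hits {F : Finset BRect} (hF : GenPos F) {m : ℕ} (hm : 1 ≤ m) {x : ℝ}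
    (hd : Deep F m x) : (Eset F m x ∩ Sel F m).Nonempty := by
  have hTne : (Tset F x).Nonempty := by
    rw [← Finset.card_pos]; exact lt_of_lt_of_le hm hd
  obtain ⟨R, hRT, hRmax⟩ := Finset.exists_max_image (Tset F x) (fun H => H.t) hTne
  have hRF : R ∈ F := Tset_subset hRT
  have hRE : R ∈ Eset F m x := by
    rw [mem_Eset]
    refine ⟨hRT, ?_⟩
    have hz : (Above F x R).card = 0 := by
      rw [Finset.card_eq_zero, Finset.eq_empty_iff_forall_notMem]
      intro H hH
      rw [mem_Above] at hH
      exact absurd (hRmax H hH.1) (not_le_of_gt hH.2)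
    omega
  by_cases hhit : (Eset F m x ∩ fS F m (rnk F R)).Nonempty
  · obtain ⟨P, hP⟩ := hhit
    rw [Finset.mem_inter] at hP
    exact ⟨P, Finset.mem_inter.mpr ⟨hP.1, fS_subset_Sel _ hP.2⟩⟩
  · have hcond : Cond F m R (fS F m (rnk F R)) :=
      ⟨x, hd, hRT, hRmax, Finset.not_nonempty_iff_eq_empty.mp hhit⟩
    have : R ∈ fS F m (rnk F R + 1) := by
      rw [fS, Finset.mem_union, mem_filter]
      exact Or.inr ⟨hRF, rfl, hcond⟩
    exact ⟨R, Finset.mem_inter.mpr ⟨hRE, fS_subset_Sel _ this⟩⟩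

/-- Witness structure extracted for a selected rectangle. -/
lemma Sel_witness {F : Finset BRect} (hF : GenPos F) {m : ℕ} {R : BRect}
    (hR : R ∈ Sel F m) :
    ∃ x : ℝ, Deep F m x ∧ R ∈ Tset F x ∧ (∀ H ∈ Tset F x, H.t ≤ R.t) ∧
      (∀ P ∈ Sel F m, P.t < R.t → P ∉ Eset F m x) := by
  obtain ⟨hRF, _, x, hd, hT, hmax, hempty⟩ := mem_fS_iff.mp hR
  refine ⟨x, hd, hT, hmax, ?_⟩
  intro P hPS hPt hPE
  have : P ∈ fS F m (rnk F R) := (mem_fS_rnk_iff hF hRF).mpr ⟨hPS, hPt⟩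
  have : P ∈ Eset F m x ∩ fS F m (rnk F R) := Finset.mem_inter.mpr ⟨hPE, this⟩
  rw [hempty] at this
  exact absurd this (Finset.notMem_empty _)

/-- Escape dichotomy from tower-freeness: a rectangle above `P` is not strictly
inside `P`'s interval. -/
lemma escape {F : Finset BRect} (hF : GenPos F)
    (hfree : ∀ R ∈ F, ∀ R' ∈ F, ¬ TowerPair R R') {P H : BRect}
    (hP : P ∈ F) (hH : H ∈ F) (ht : P.t < H.t) :
    H.l < P.l ∨ P.r < H.r := by
  have hne : P ≠ H := fun h => absurd (h ▸ ht) (lt_irrefl _)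
  have hgp := hF P hP H hH hne
  have hnt : ¬ TowerPair P H := hfree P hP H hH
  rw [TowerPair] at hnt
  push_neg at hnt
  rcases lt_trichotomy H.l P.l with h | h | h
  · exact Or.inl h
  · exact absurd h.symm hgp.1
  · rcases lt_trichotomy P.r H.r with h2 | h2 | h2
    · exact Or.inr h2
    · exact absurd h2.symm (Ne.symm hgp.2.1)
    · exact absurd ht (not_lt_of_ge (hnt.1 h h2))

/-- Same-side witness contradiction, both witnesses to the right of `xs`. -/
lemma no_same_side_right {F : Finset BRect} (hF : GenPos F)
    (hfree : ∀ R ∈ F, ∀ R' ∈ F, ¬ TowerPair R R') {m : ℕ} {xs p q : ℝ} {P Q : BRect}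
    (hdx : Deep F m xs) (hdq : Deep F m q)
    (hPE : P ∈ Eset F m xs) (hQE : Q ∈ Eset F m xs)
    (ht : P.t < Q.t)
    (hPp : P ∈ Tset F p) (hPmax : ∀ H ∈ Tset F p, H.t ≤ P.t)
    (hQq : Q ∈ Tset F q)
    (hPnotEq : P ∉ Eset F m q)
    (hxp : xs ≤ p) (hxq : xs ≤ q) : False := by
  have hPxs := mem_Tset.mp (Eset_subset_Tset hPE)
  have hQxs := mem_Tset.mp (Eset_subset_Tset hQE)
  have hPp' := mem_Tset.mp hPp
  have hQq' := mem_Tset.mp hQq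
  rcases le_or_gt p q with hpq | hpq
  · -- `Q` lives at `p`, above the top rectangle `P` there
    have hQp : Q ∈ Tset F p := mem_Tset.mpr
      ⟨hQxs.1, le_trans hQxs.2.1 hxp, le_trans hpq hQq'.2.2⟩
    exact absurd (hPmax Q hQp) (not_le_of_gt ht)
  · -- `q < p`; `P` lives at `q` but is not in `Eset q`
    have hPq : P ∈ Tset F q := mem_Tset.mpr
      ⟨hPxs.1, le_trans hPxs.2.1 hxq, le_trans (le_of_lt hpq) hPp'.2.2⟩
    have hsub : Eset F m q ⊆ Eset F m xs := by
      intro H hH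
      have hHq := mem_Tset.mp (Eset_subset_Tset hH)
      have hPH : P.t < H.t := lt_t_of_notMem_Eset hF hPq hPnotEq hH
      rcases escape hF hfree hPxs.1 hHq.1 hPH with hesc | hesc
      · -- H sticks out to the left: H contains xs
        have : H ∈ Tset F xs := mem_Tset.mpr
          ⟨hHq.1, le_trans (le_of_lt hesc) hPxs.2.1, le_trans hxq hHq.2.2⟩
        exact mem_Eset_of_above hPE this hPH
      · -- H sticks out to the right: H contains p, contradicting maximality of P
        have : H ∈ Tset F p := mem_Tset.mpr
          ⟨hHq.1, le_trans hHq.2.1 (le_of_lt hpq), le_trans hPp'.2.2 (le_of_lt hesc)⟩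
        exact absurd (hPmax H this) (not_le_of_gt hPH)
    have hEq : Eset F m q = Eset F m xs := by
      apply Finset.eq_of_subset_of_card_le hsub
      rw [card_Eset hF hdq, card_Eset hF hdx]
    rw [hEq] at hPnotEq
    exact hPnotEq hPE

/-- Same-side witness contradiction, both witnesses to the left of `xs`. -/
lemma no_same_side_left {F : Finset BRect} (hF : GenPos F)
    (hfree : ∀ R ∈ F, ∀ R' ∈ F, ¬ TowerPair R R') {m : ℕ} {xs p q : ℝ} {P Q : BRect}
    (hdx : Deep F m xs) (hdq : Deep F m q)
    (hPE : P ∈ Eset F m xs) (hQE : Q ∈ Eset F m xs)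
    (ht : P.t < Q.t)
    (hPp : P ∈ Tset F p) (hPmax : ∀ H ∈ Tset F p, H.t ≤ P.t)
    (hQq : Q ∈ Tset F q)
    (hPnotEq : P ∉ Eset F m q)
    (hxp : p ≤ xs) (hxq : q ≤ xs) : False := by
  have hPxs := mem_Tset.mp (Eset_subset_Tset hPE)
  have hQxs := mem_Tset.mp (Eset_subset_Tset hQE)
  have hPp' := mem_Tset.mp hPp
  have hQq' := mem_Tset.mp hQq
  rcases le_or_gt q p with hpq | hpq
  · have hQp : Q ∈ Tset F p := mem_Tset.mpr
      ⟨hQxs.1, le_trans hQq'.2.1 hpq, le_trans hxp hQxs.2.2⟩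
    exact absurd (hPmax Q hQp) (not_le_of_gt ht)
  · -- `p < q`
    have hPq : P ∈ Tset F q := mem_Tset.mpr
      ⟨hPxs.1, le_trans hPp'.2.1 (le_of_lt hpq), le_trans hxq hPxs.2.2⟩
    have hsub : Eset F m q ⊆ Eset F m xs := by
      intro H hH
      have hHq := mem_Tset.mp (Eset_subset_Tset hH)
      have hPH : P.t < H.t := lt_t_of_notMem_Eset hF hPq hPnotEq hH
      rcases escape hF hfree hPxs.1 hHq.1 hPH with hesc | hesc
      · -- H sticks out to the left: H contains p
        have : H ∈ Tset F p := mem_Tset.mpr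
          ⟨hHq.1, le_trans (le_of_lt hesc) hPp'.2.1, le_trans (le_of_lt hpq) hHq.2.2⟩
        exact absurd (hPmax H this) (not_le_of_gt hPH)
      · -- H sticks out to the right: H contains xs
        have : H ∈ Tset F xs := mem_Tset.mpr
          ⟨hHq.1, le_trans hHq.2.1 hxq, le_trans hPxs.2.2 (le_of_lt hesc)⟩
        exact mem_Eset_of_above hPE this hPH
    have hEq : Eset F m q = Eset F m xs := by
      apply Finset.eq_of_subset_of_card_le hsub
      rw [card_Eset hF hdq, card_Eset hF hdx]
    rw [hEq] at hPnotEq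
    exact hPnotEq hPE

/-- Two distinct selected rectangles in a common deep `Eset` cannot have witnesses
on the same side. -/
lemma no_two_same_side {F : Finset BRect} (hF : GenPos F)
    (hfree : ∀ R ∈ F, ∀ R' ∈ F, ¬ TowerPair R R') {m : ℕ} {xs p q : ℝ} {P Q : BRect}
    (hdx : Deep F m xs) (hne : P ≠ Q)
    (hPS : P ∈ Sel F m) (hQS : Q ∈ Sel F m)
    (hPE : P ∈ Eset F m xs) (hQE : Q ∈ Eset F m xs)
    (hdp : Deep F m p) (hPp : P ∈ Tset F p) (hPmax : ∀ H ∈ Tset F p, H.t ≤ P.t)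
    (hPblock : ∀ O ∈ Sel F m, O.t < P.t → O ∉ Eset F m p)
    (hdq : Deep F m q) (hQq : Q ∈ Tset F q) (hQmax : ∀ H ∈ Tset F q, H.t ≤ Q.t)
    (hQblock : ∀ O ∈ Sel F m, O.t < Q.t → O ∉ Eset F m q)
    (hside : (xs ≤ p ∧ xs ≤ q) ∨ (p ≤ xs ∧ q ≤ xs)) : False := by
  have hPF : P ∈ F := Tset_subset (Eset_subset_Tset hPE)
  have hQF : Q ∈ F := Tset_subset (Eset_subset_Tset hQE)
  have htne : P.t ≠ Q.t := fun h => hne (t_injOn hF hPF hQF h)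
  rcases lt_or_gt_of_ne htne with ht | ht
  · have hPnotEq : P ∉ Eset F m q := hQblock P hPS ht
    rcases hside with ⟨h1, h2⟩ | ⟨h1, h2⟩
    · exact no_same_side_right hF hfree hdx hdq hPE hQE ht hPp hPmax hQq hPnotEq h1 h2
    · exact no_same_side_left hF hfree hdx hdq hPE hQE ht hPp hPmax hQq hPnotEq h1 h2
  · have hQnotEp : Q ∉ Eset F m p := hPblock Q hQS ht
    rcases hside with ⟨h1, h2⟩ | ⟨h1, h2⟩
    · exact no_same_side_right hF hfree hdx hdp hQE hPE ht hQq hQmax hPp hQnotEp h2 h1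
    · exact no_same_side_left hF hfree hdx hdp hQE hPE ht hQq hQmax hPp hQnotEp h2 h1

/-- The key shallowness property: `Sel` meets every deep `Eset` in at most two
rectangles. -/
lemma Sel_ply {F : Finset BRect} (hF : GenPos F)
    (hfree : ∀ R ∈ F, ∀ R' ∈ F, ¬ TowerPair R R') {m : ℕ} {xs : ℝ}
    (hdx : Deep F m xs) : (Eset F m xs ∩ Sel F m).card ≤ 2 := by
  by_contra hcard
  push_neg at hcard
  -- extract three distinct members
  have h1lt : 1 < (Eset F m xs ∩ Sel F m).card := by omega
  obtain ⟨a, ha, b, hb, hab⟩ := Finset.one_lt_card.mp h1lt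
  have hcd : 0 < ((Eset F m xs ∩ Sel F m) \ {a, b}).card := by
    have h1 := Finset.card_le_card_sdiff_add_card (s := Eset F m xs ∩ Sel F m) (t := {a, b})
    have h2 : ({a, b} : Finset BRect).card ≤ 2 := Finset.card_insert_le _ _ |>.trans (by simp)
    omega
  obtain ⟨c, hc⟩ := Finset.card_pos.mp hcd
  rw [Finset.mem_sdiff] at hc
  have hca : c ≠ a := fun h => hc.2 (by simp [h])
  have hcb : c ≠ b := fun h => hc.2 (by simp [h])
  have hc' := hc.1
  -- memberships
  rw [Finset.mem_inter] at ha hb hc'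
  -- witnesses
  obtain ⟨pa, hda, hTa, hMa, hBa⟩ := Sel_witness hF ha.2
  obtain ⟨pb, hdb, hTb, hMb, hBb⟩ := Sel_witness hF hb.2
  obtain ⟨pc, hdc, hTc, hMc, hBc⟩ := Sel_witness hF hc'.2
  -- pigeonhole on sides
  have kill := fun {P Q : BRect} {p q : ℝ} => no_two_same_side hF hfree (m := m)
    (xs := xs) (p := p) (q := q) (P := P) (Q := Q) hdx
  rcases le_total xs pa with h1 | h1 <;> rcases le_total xs pb with h2 | h2 <;>
    rcases le_total xs pc with h3 | h3
  · exact kill hab ha.2 hb.2 ha.1 hb.1 hda hTa hMa hBa hdb hTb hMb hBb (Or.inl ⟨h1, h2⟩)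
  · exact kill hab ha.2 hb.2 ha.1 hb.1 hda hTa hMa hBa hdb hTb hMb hBb (Or.inl ⟨h1, h2⟩)
  · exact kill hca.symm ha.2 hc'.2 ha.1 hc'.1 hda hTa hMa hBa hdc hTc hMc hBc (Or.inl ⟨h1, h3⟩)
  · exact kill hcb.symm hb.2 hc'.2 hb.1 hc'.1 hdb hTb hMb hBb hdc hTc hMc hBc (Or.inr ⟨h2, h3⟩)
  · exact kill hcb.symm hb.2 hc'.2 hb.1 hc'.1 hdb hTb hMb hBb hdc hTc hMc hBc (Or.inl ⟨h2, h3⟩)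
  · exact kill hca.symm ha.2 hc'.2 ha.1 hc'.1 hda hTa hMa hBa hdc hTc hMc hBc (Or.inr ⟨h1, h3⟩)
  · exact kill hab ha.2 hb.2 ha.1 hb.1 hda hTa hMa hBa hdb hTb hMb hBb (Or.inr ⟨h1, h2⟩)
  · exact kill hab ha.2 hb.2 ha.1 hb.1 hda hTa hMa hBa hdb hTb hMb hBb (Or.inr ⟨h1, h2⟩)

/-- Main lemma: the polychromatic colouring, by induction on the number of colours. -/
lemma main : ∀ k : ℕ, 1 ≤ k → ∀ F : Finset BRect, GenPos F →
    (∀ R ∈ F, ∀ R' ∈ F, ¬ TowerPair R R') →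
    ∃ c : BRect → Fin k, Polychromatic k (2 * k - 1) F c := by
  intro k hk
  induction k, hk using Nat.le_induction with
  | base =>
    intro F hF hfree
    refine ⟨fun _ => 0, ?_⟩
    intro p hp i
    obtain ⟨G, hGF, hGcard, hGcov⟩ := hp
    have hGne : G.Nonempty := Finset.card_pos.mp (by omega)
    obtain ⟨R, hR⟩ := hGne
    exact ⟨R, hGF hR, hGcov R hR, Subsingleton.elim _ _⟩
  | succ k hk IH =>
    intro F hF hfree
    have hm : (1 : ℕ) ≤ 2 * k + 1 := by omega
    set S := Sel F (2 * k + 1) with hSdef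
    have hgp' : GenPos (F \ S) := fun R hR R' hR' hne =>
      hF R (Finset.mem_sdiff.mp hR).1 R' (Finset.mem_sdiff.mp hR').1 hne
    have hfree' : ∀ R ∈ F \ S, ∀ R' ∈ F \ S, ¬ TowerPair R R' := fun R hR R' hR' =>
      hfree R (Finset.mem_sdiff.mp hR).1 R' (Finset.mem_sdiff.mp hR').1
    obtain ⟨c', hc'⟩ := IH (F \ S) hgp' hfree'
    refine ⟨fun R => if R ∈ S then Fin.last k else Fin.castSucc (c' R), ?_⟩
    intro p hp i
    obtain ⟨G, hGF, hGcard, hGcov⟩ := hp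
    have hGcard' : 2 * k + 1 ≤ G.card := by omega
    have hCsub : G ⊆ Tset F p.1 := fun R hR =>
      mem_Tset.mpr ⟨hGF hR, (hGcov R hR).1, (hGcov R hR).2.1⟩
    have hdeep : Deep F (2 * k + 1) p.1 :=
      le_trans hGcard' (Finset.card_le_card hCsub)
    have hEcov : ∀ R ∈ Eset F (2 * k + 1) p.1, R.covers p := by
      intro R hR
      have hRT := mem_Tset.mp (Eset_subset_Tset hR)
      refine ⟨hRT.2.1, hRT.2.2, ?_⟩
      by_contra hy
      push_neg at hy
      have hsub : G ⊆ Above F p.1 R := by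
        intro H hH
        exact mem_Above.mpr ⟨hCsub hH, lt_of_lt_of_le hy (hGcov H hH).2.2⟩
      have h1 := Finset.card_le_card hsub
      have h2 := (mem_Eset.mp hR).2
      omega
    by_cases hi : i = Fin.last k
    · obtain ⟨R, hR⟩ := Sel_hits hF hm hdeep
      rw [Finset.mem_inter] at hR
      refine ⟨R, Tset_subset (Eset_subset_Tset hR.1), hEcov R hR.1, ?_⟩
      show (if R ∈ S then Fin.last k else (c' R).castSucc) = i
      rw [if_pos (show R ∈ S from hR.2), hi]
    · have hply := Sel_ply hF hfree hdeep
      rw [← hSdef] at hply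
      have hcardE := card_Eset hF hdeep
      have hcardES : 2 * k - 1 ≤ ((Eset F (2 * k + 1) p.1) \ S).card := by
        have h := Finset.card_sdiff_add_card_inter (Eset F (2 * k + 1) p.1) S
        omega
      have hsub' : (Eset F (2 * k + 1) p.1) \ S ⊆ F \ S := by
        intro R hR
        rw [Finset.mem_sdiff] at hR ⊢
        exact ⟨Tset_subset (Eset_subset_Tset hR.1), hR.2⟩
      obtain ⟨R, hRF', hRcov, hRc⟩ := hc' p
        ⟨(Eset F (2 * k + 1) p.1) \ S, hsub', hcardES,
          fun R hR => hEcov R (Finset.mem_sdiff.mp hR).1⟩ (i.castPred hi)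
      refine ⟨R, (Finset.mem_sdiff.mp hRF').1, hRcov, ?_⟩
      show (if R ∈ S then Fin.last k else (c' R).castSucc) = i
      rw [if_neg (Finset.mem_sdiff.mp hRF').2, hRc, Fin.castSucc_castPred]

end

end TowerfreeProof

/-- For tower-free families, `m_k^* ≤ 2k - 1`. -/
theorem towerfree_mk_le (k : ℕ) (hk : 1 ≤ k) (F : Finset BRect) (hF : GenPos F)
    (hfree : ∀ R ∈ F, ∀ R' ∈ F, ¬ TowerPair R R') :
    ∃ c : BRect → Fin k, Polychromatic k (2 * k - 1) F c :=
  TowerfreeProof.main k hk F hF hfree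
end
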